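/- arXiv:1203.4072 — 6 statements merged into one kernel-verified Lean document; each statement's English description precedes it below -/
import Mathlib

section
/- Let R be a local Gaussian ring with nilradical N, and let D = {x ∈ R : x² = 0}. If N ≠ D, then the maximal ideal of the localization R_N (which equals the nilradical of R_N) is nonzero. -/
open CategoryTheory Polynomial

universe u

noncomputable section

/-- The content of a polynomial: the ideal generated by its coefficients. -/
def contentIdeal {R : Type u} [CommRing R] (f : R[X]) : Ideal R :=
  Ideal.span (Set.range f.coeff)

/-- A commutative ring is Gaussian if `c(fg) = c(f)c(g)` for all polynomials `f, g`. -/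
def IsGaussian (R : Type u) [CommRing R] : Prop :=
  ∀ f g : R[X], _root_.contentIdeal (f * g) = _root_.contentIdeal f * _root_.contentIdeal g

/-- `Tor_n^R(A, B)` as a module, via the left derived functor of the tensor product. -/
abbrev TorM (R : Type u) [CommRing R] (n : ℕ) (A B : ModuleCat.{u} R) : ModuleCat.{u} R :=
  ((Tor (ModuleCat.{u} R) n).obj A).obj B

/-- The flat (weak) dimension of a module `M`:
`sup {d : Tor_d(A, M) ≠ 0 for some A}`, as an element of `ℕ∞`. -/
def wgdModule (R : Type u) [CommRing R] (M : ModuleCat.{u} R) : ℕ∞ :=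
  sSup ((↑) '' {d : ℕ | ∃ A : ModuleCat.{u} R, Nontrivial (TorM R d A M)})

/-- The weak global dimension of a ring `R`:
`sup {d : Tor_d(A, B) ≠ 0 for some modules A, B}`, as an element of `ℕ∞`. -/
def wgd (R : Type u) [CommRing R] : ℕ∞ :=
  sSup ((↑) '' {d : ℕ | ∃ A B : ModuleCat.{u} R, Nontrivial (TorM R d A B)})

lemma contentIdeal_linear {R : Type u} [CommRing R] (a b : R) :
    _root_.contentIdeal (C a * X + C b) = Ideal.span {a, b} := by
  unfold _root_.contentIdeal
  apply le_antisymm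
  · rw [Ideal.span_le]
    rintro y ⟨n, rfl⟩
    match n with
    | 0 => simp only [coeff_add, coeff_C_mul, coeff_X_zero, mul_zero, coeff_C, if_pos rfl,
        zero_add]; exact Ideal.subset_span (by simp)
    | 1 => simp only [coeff_add, coeff_C_mul, coeff_X_one, mul_one, coeff_C]
           simp only [one_ne_zero, if_false, add_zero]
           exact Ideal.subset_span (by simp)
    | (n+2) =>
        have : (C a * X + C b).coeff (n+2) = 0 := by
          simp [coeff_X, coeff_C]
        rw [this]; exact Ideal.zero_mem _
  · rw [Ideal.span_le]
    rintro y hy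
    rcases hy with rfl | rfl
    · exact Ideal.subset_span ⟨1, by simp⟩
    · exact Ideal.subset_span ⟨0, by simp⟩

lemma contentIdeal_CX {R : Type u} [CommRing R] (a : R) :
    _root_.contentIdeal (C a * X) = Ideal.span {a} := by
  have h : (C a * X : R[X]) = C a * X + C 0 := by simp
  rw [h, contentIdeal_linear]
  rw [Set.pair_comm, Ideal.span_insert, Ideal.span_singleton_eq_bot.mpr rfl, bot_sup_eq]

lemma contentIdeal_zero {R : Type u} [CommRing R] :
    _root_.contentIdeal (0 : R[X]) = ⊥ := by
  unfold _root_.contentIdeal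
  have : Set.range (0 : R[X]).coeff = {0} := by
    ext y; simp [eq_comm]
  rw [this, Ideal.span_singleton_eq_bot.mpr rfl]

/-- If `R` is a local Gaussian ring whose nilradical `N` differs from `D = {x : x² = 0}`,
then the maximal ideal of the localization `R_N` is nonzero. -/
theorem maximalIdeal_localization_nilradical_ne_bot (R : Type u) [CommRing R] [IsLocalRing R]
    (hR : IsGaussian R) [hN : (nilradical R).IsPrime]
    (D : Ideal R) (hD : ∀ x : R, x ∈ D ↔ x ^ 2 = 0)
    (hND : nilradical R ≠ D) :
    IsLocalRing.maximalIdeal (Localization.AtPrime (nilradical R)) ≠ ⊥ := by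
  intro hbot
  have hDN : D ≤ nilradical R := fun d hd => by
    rw [mem_nilradical]
    exact ⟨2, (hD d).mp hd⟩
  obtain ⟨x, hxN, hxD⟩ := SetLike.exists_of_lt (lt_of_le_of_ne hDN (Ne.symm hND))
  -- x maps to 0 in the localization
  have hmap : algebraMap R (Localization.AtPrime (nilradical R)) x = 0 := by
    have h1 : algebraMap R (Localization.AtPrime (nilradical R)) x ∈
        Ideal.map (algebraMap R (Localization.AtPrime (nilradical R))) (nilradical R) :=
      Ideal.mem_map_of_mem _ hxN
    rw [Localization.AtPrime.map_eq_maximalIdeal] at h1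
    rw [hbot] at h1
    simpa using h1
  obtain ⟨s, hs⟩ := (IsLocalization.map_eq_zero_iff (nilradical R).primeCompl _ x).mp hmap
  -- hs : ↑s * x = 0
  have h1 : (C (s : R) : R[X]) * C x = 0 := by rw [← C_mul, hs, C_0]
  -- Step A : x*x = c * (s*s) for some c
  have key := hR (C (s : R) * X + C x) (C x * X + C (s : R))
  have hprod : (C (s : R) * X + C x) * (C x * X + C (s : R))
      = C ((s : R) * (s : R) + x * x) * X := by
    rw [C_add, C_mul, C_mul]
    linear_combination (X ^ 2 + 1 : R[X]) * h1
  rw [hprod, contentIdeal_CX, contentIdeal_linear, contentIdeal_linear] at key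
  have hmem : (s : R) * (s : R) ∈ Ideal.span {(s : R) * (s : R) + x * x} := by
    rw [key]
    exact Ideal.mul_mem_mul (Ideal.subset_span (by simp)) (Ideal.subset_span (by simp))
  obtain ⟨β, hβ⟩ := Ideal.mem_span_singleton'.mp hmem
  -- hβ : β * (s*s + x*x) = s*s
  have h2 : (1 - β) * ((s : R) * (s : R)) = β * (x * x) := by linear_combination -hβ
  have hβN : (1 - β) ∈ nilradical R := by
    have hx2 : β * (x * x) ∈ nilradical R :=
      Ideal.mul_mem_left _ _ (Ideal.mul_mem_left _ _ hxN)
    have hmem2 : (1 - β) * ((s : R) * (s : R)) ∈ nilradical R := h2 ▸ hx2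
    rcases hN.mem_or_mem hmem2 with h | h
    · exact h
    · rcases hN.mem_or_mem h with h' | h' <;> exact absurd h' s.2
  have hu : IsUnit β := by
    have hnil : IsNilpotent (1 - β) := mem_nilradical.mp hβN
    have := hnil.isUnit_one_sub
    simpa using this
  obtain ⟨u, hu'⟩ := hu
  obtain ⟨v, hv⟩ : ∃ v : R, v * β = 1 := ⟨↑u⁻¹, by rw [← hu']; exact u.inv_mul⟩
  obtain ⟨c, hc⟩ : ∃ c : R, x * x = c * ((s : R) * (s : R)) :=
    ⟨v * (1 - β), by linear_combination (-v) * h2 - (x * x) * hv⟩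
  -- Step B : the killer polynomial identity
  have h3 : (C x : R[X]) * C x = C c * (C (s : R) * C (s : R)) := by
    rw [← C_mul, ← C_mul, ← C_mul, hc]
  have hzero : (C (s : R) * X + C x) * (C x * X - C c * C (s : R)) = 0 := by
    linear_combination (X ^ 2 - C c : R[X]) * h1 + (X : R[X]) * h3
  have key2 := hR (C (s : R) * X + C x) (C x * X - C c * C (s : R))
  have hg2 : (C x * X - C c * C (s : R) : R[X]) = C x * X + C (-(c * (s : R))) := by
    rw [C_neg, C_mul]; ring
  rw [hzero, _root_.contentIdeal_zero, hg2, contentIdeal_linear, contentIdeal_linear] at key2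
  have hxx : x * x = 0 := by
    have hmem3 : x * x ∈ (⊥ : Ideal R) := by
      rw [key2]
      exact Ideal.mul_mem_mul (Ideal.subset_span (by simp)) (Ideal.subset_span (by simp))
    simpa using hmem3
  exact hxD ((hD x).mpr (by rw [pow_two]; exact hxx))
end
end

section
/- Let (R, m) be a local Gaussian ring, let D = {x ∈ R : x² = 0}, and let M be an R-module with wgd_R(M) = n. If I is an ideal of R with Tor_n^R(R/I, M) ≠ 0, then there exists an ideal J of R with J ⊇ I + D and Tor_n^R(R/J, M) ≠ 0. -/
open CategoryTheory Polynomial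

universe u

noncomputable section

lemma gaussian_mul_eq_zero {R : Type u} [CommRing R] (hR : IsGaussian R)
    {x y : R} (hx : x ^ 2 = 0) (hy : y ^ 2 = 0) : x * y = 0 := by
  have hfg : (C x + C y * X) * (C x - C y * X) = 0 := by
    have h : (C x + C y * X) * (C x - C y * X) = C x ^ 2 - C y ^ 2 * X ^ 2 := by ring
    rw [h, ← map_pow, ← map_pow, hx, hy]
    simp
  have h := hR (C x + C y * X) (C x - C y * X)
  rw [hfg] at h
  have h0 : _root_.contentIdeal (0 : R[X]) = ⊥ := by
    rw [eq_bot_iff, _root_.contentIdeal, Ideal.span_le]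
    rintro r ⟨i, rfl⟩
    simp
  rw [h0] at h
  have hx' : x ∈ _root_.contentIdeal (C x + C y * X) := Ideal.subset_span ⟨0, by simp⟩
  have hy' : -y ∈ _root_.contentIdeal (C x - C y * X) := Ideal.subset_span ⟨1, by simp⟩
  have hmem := Ideal.mul_mem_mul hx' hy'
  rw [← h] at hmem
  have : x * -y = 0 := by simpa using hmem
  rw [mul_neg, neg_eq_zero] at this
  exact this


section Chase

variable {R : Type u} [CommRing R]
variable {P2 P1 P0 : Type u} [AddCommGroup P2] [AddCommGroup P1] [AddCommGroup P0]
  [Module R P2] [Module R P1] [Module R P0]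

/-- "cycle-not-boundary": there is a cycle in `A ⊗ P1` that is not a boundary. -/
def CNB (δ1 : P2 →ₗ[R] P1) (δ0 : P1 →ₗ[R] P0) (A : Type u) [AddCommGroup A] [Module R A] : Prop :=
  ∃ z : TensorProduct R A P1, δ0.lTensor A z = 0 ∧ z ∉ Set.range (δ1.lTensor A)

lemma comm_lr {A B : Type u} [AddCommGroup A] [Module R A] [AddCommGroup B] [Module R B]
    (f : A →ₗ[R] B) {Q Q' : Type u} [AddCommGroup Q] [Module R Q] [AddCommGroup Q'] [Module R Q']
    (δ : Q →ₗ[R] Q') (z : TensorProduct R A Q) :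
    f.rTensor Q' (δ.lTensor A z) = δ.lTensor B (f.rTensor Q z) := by
  rw [← LinearMap.comp_apply, ← LinearMap.comp_apply, LinearMap.rTensor_comp_lTensor,
    LinearMap.lTensor_comp_rTensor]

lemma CNB.congr {δ1 : P2 →ₗ[R] P1} {δ0 : P1 →ₗ[R] P0} {A B : Type u}
    [AddCommGroup A] [Module R A] [AddCommGroup B] [Module R B]
    (e : A ≃ₗ[R] B) (h : CNB δ1 δ0 A) : CNB δ1 δ0 B := by
  obtain ⟨z, hz0, hznb⟩ := h
  refine ⟨e.toLinearMap.rTensor P1 z, ?_, ?_⟩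
  · rw [← comm_lr, hz0, map_zero]
  · rintro ⟨w, hw⟩
    apply hznb
    refine ⟨e.symm.toLinearMap.rTensor P2 w, ?_⟩
    rw [← comm_lr, hw, ← LinearMap.comp_apply, ← LinearMap.rTensor_comp]
    have : (e.symm.toLinearMap.comp e.toLinearMap) = LinearMap.id := by ext a; simp
    rw [this, LinearMap.rTensor_id, LinearMap.id_apply]

lemma chase1 [Module.Flat R P0] {δ1 : P2 →ₗ[R] P1} {δ0 : P1 →ₗ[R] P0}
    (hδ : δ0.comp δ1 = 0)
    {A B C : Type u} [AddCommGroup A] [AddCommGroup B] [AddCommGroup C]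
    [Module R A] [Module R B] [Module R C]
    (f : A →ₗ[R] B) (g : B →ₗ[R] C) (hf : Function.Injective f)
    (hfg : Function.Exact f g) (hg : Function.Surjective g)
    (hC : ¬ CNB δ1 δ0 C) (hB : CNB δ1 δ0 B) : CNB δ1 δ0 A := by
  obtain ⟨z, hz0, hznb⟩ := hB
  -- image of z in C ⊗ P1 is a cycle, hence a boundary
  have hzC : δ0.lTensor C (g.rTensor P1 z) = 0 := by
    rw [← comm_lr, hz0, map_zero]
  have hCall : ∀ w : TensorProduct R C P1, δ0.lTensor C w = 0 →
      w ∈ Set.range (δ1.lTensor C) := by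
    intro w hw
    by_contra hnw
    exact hC ⟨w, hw, hnw⟩
  obtain ⟨wC, hwC⟩ := hCall _ hzC
  obtain ⟨wB, rfl⟩ := LinearMap.rTensor_surjective P2 hg wC
  -- z₁ := z - d wB maps to 0 in C ⊗ P1
  set z₁ := z - δ1.lTensor B wB with hz₁
  have hz₁C : g.rTensor P1 z₁ = 0 := by
    rw [hz₁, map_sub, comm_lr, hwC, sub_self]
  have hex : Function.Exact (f.rTensor P1) (g.rTensor P1) := rTensor_exact P1 hfg hg
  obtain ⟨zA, hzA⟩ := (hex z₁).mp hz₁C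
  refine ⟨zA, ?_, ?_⟩
  · have hinj : Function.Injective (f.rTensor P0) :=
      Module.Flat.rTensor_preserves_injective_linearMap f hf
    apply hinj
    rw [comm_lr, hzA, map_zero, hz₁, map_sub, hz0, ← LinearMap.comp_apply,
      ← LinearMap.lTensor_comp, hδ, LinearMap.lTensor_zero]
    simp
  · rintro ⟨u, hu⟩
    apply hznb
    refine ⟨wB + f.rTensor P2 u, ?_⟩
    rw [map_add, ← comm_lr, hu, hzA, hz₁]
    abel

lemma chase2 [Module.Flat R P0] {δ1 : P2 →ₗ[R] P1} {δ0 : P1 →ₗ[R] P0}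
    {N : Type u} [AddCommGroup N] [Module R N]
    (h : CNB δ1 δ0 N) : ∃ N' : Submodule R N, N'.FG ∧ CNB δ1 δ0 ↥N' := by
  obtain ⟨z, hz0, hznb⟩ := h
  obtain ⟨N', hfin, hsub⟩ := TensorProduct.exists_finite_submodule_left_of_setFinite {z}
    (Set.finite_singleton z)
  obtain ⟨z', hz'⟩ := LinearMap.mem_range.mp (hsub rfl)
  refine ⟨N', Module.Finite.iff_fg.mp hfin, z', ?_, ?_⟩
  · have hinj : Function.Injective (N'.subtype.rTensor P0) :=
      Module.Flat.rTensor_preserves_injective_linearMap N'.subtype N'.injective_subtype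
    apply hinj
    rw [comm_lr, hz', hz0, map_zero]
  · rintro ⟨w', hw'⟩
    apply hznb
    refine ⟨N'.subtype.rTensor P2 w', ?_⟩
    rw [← comm_lr, hw', hz']

lemma aux_fin {N : Type u} [AddCommGroup N] [Module R N] (N' : Submodule R N) (s : Finset N)
    (hs : ∀ y ∈ s, y ∈ N') (hspan : Submodule.span R (s : Set N) = N') :
    ∃ t : Finset ↥N', t.card ≤ s.card ∧ Submodule.span R (t : Set ↥N') = ⊤ := by
  classical
  refine ⟨s.attach.image (fun y => (⟨y.1, hs y.1 y.2⟩ : ↥N')),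
    le_trans Finset.card_image_le (by simp), ?_⟩
  apply Submodule.map_injective_of_injective N'.injective_subtype
  rw [Submodule.map_span, Submodule.map_top, Submodule.range_subtype]
  conv_rhs => rw [← hspan]
  congr 1
  ext z
  constructor
  · rintro ⟨w, hw, rfl⟩
    rw [Finset.coe_image] at hw
    obtain ⟨y, _, rfl⟩ := hw
    exact y.2
  · intro hz
    refine ⟨⟨z, hs z hz⟩, ?_, rfl⟩
    rw [Finset.coe_image]
    exact ⟨⟨z, hz⟩, by simp, rfl⟩

end Chase
section Chase3

variable {R : Type u} [CommRing R]
variable {P2 P1 P0 : Type u} [AddCommGroup P2] [AddCommGroup P1] [AddCommGroup P0]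
  [Module R P2] [Module R P1] [Module R P0]

lemma chase3 [Module.Flat R P0] {δ1 : P2 →ₗ[R] P1} {δ0 : P1 →ₗ[R] P0}
    (hδ : δ0.comp δ1 = 0) (K : Ideal R) :
    ∀ (k : ℕ) (N : Type u) (instG : AddCommGroup N) (instM : @Module R N _ instG.toAddCommMonoid)
      (s : Finset N), s.card ≤ k → Submodule.span R (s : Set N) = ⊤ →
      (∀ r ∈ K, ∀ x : N, r • x = 0) →
      CNB δ1 δ0 N → ∃ J : Ideal R, K ≤ J ∧ CNB δ1 δ0 (R ⧸ J) := by
  classical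
  intro k
  induction k with
  | zero =>
    intro N instG instM s hcard hspan hkill hcnb
    have hN : ∀ x : N, x = 0 := by
      intro x
      have hx : x ∈ Submodule.span R ((s : Set N)) := by rw [hspan]; trivial
      rw [Finset.card_eq_zero.mp (Nat.le_zero.mp hcard)] at hx
      simpa using hx
    have hz : ∀ w : TensorProduct R N P1, w = 0 := by
      intro w
      induction w using TensorProduct.induction_on with
      | zero => rfl
      | tmul a b => rw [hN a, TensorProduct.zero_tmul]
      | add a b ha hb => rw [ha, hb, add_zero]
    obtain ⟨z, hz0, hznb⟩ := hcnb
    exact absurd ⟨0, by rw [map_zero, hz z]⟩ hznb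
  | succ k ih =>
    intro N instG instM s hcard hspan hkill hcnb
    by_cases hk : s.card ≤ k
    · exact ih N instG instM s hk hspan hkill hcnb
    have hne : s.Nonempty := by
      rw [Finset.nonempty_iff_ne_empty]
      rintro rfl
      simp at hk
    obtain ⟨x, hx⟩ := hne
    set N'' : Submodule R N := Submodule.span R ((s.erase x : Finset N) : Set N) with hN''
    by_cases hC : CNB δ1 δ0 (N ⧸ N'')
    · -- N ⧸ N'' is cyclic generated by mk x
      set ξ : N ⧸ N'' := N''.mkQ x with hξ
      have hspanξ : Submodule.span R {ξ} = ⊤ := by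
        rw [eq_top_iff]
        intro c _
        obtain ⟨y, rfl⟩ := N''.mkQ_surjective c
        have hy : y ∈ Submodule.span R (s : Set N) := by rw [hspan]; trivial
        have : N''.mkQ y ∈ Submodule.map N''.mkQ (Submodule.span R (s : Set N)) :=
          Submodule.mem_map_of_mem hy
        rw [Submodule.map_span] at this
        refine Submodule.span_le.mpr ?_ this
        rintro w ⟨v, hv, rfl⟩
        by_cases hvx : v = x
        · subst hvx; exact Submodule.subset_span rfl
        · have hv' : v ∈ N'' := Submodule.subset_span (Finset.mem_erase.mpr ⟨hvx, hv⟩)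
          have : N''.mkQ v = 0 := by rwa [Submodule.mkQ_apply, Submodule.Quotient.mk_eq_zero]
          rw [this]
          exact Submodule.zero_mem _
      set φ : R →ₗ[R] N ⧸ N'' := LinearMap.toSpanSingleton R (N ⧸ N'') ξ with hφ
      have hφs : Function.Surjective φ := by
        rw [← LinearMap.range_eq_top, ← LinearMap.span_singleton_eq_range, hspanξ]
      refine ⟨LinearMap.ker φ, ?_, ?_⟩
      · intro r hr
        rw [LinearMap.mem_ker, hφ, LinearMap.toSpanSingleton_apply, hξ,
          ← map_smul, hkill r hr x, map_zero]
      · exact CNB.congr (φ.quotKerEquivOfSurjective hφs).symm hC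
    · have hcnb'' : CNB δ1 δ0 ↥N'' :=
        chase1 hδ N''.subtype N''.mkQ N''.injective_subtype
          (LinearMap.exact_subtype_mkQ N'') (N''.mkQ_surjective) hC hcnb
      obtain ⟨t, htcard, htspan⟩ := aux_fin N'' (s.erase x)
        (fun y hy => Submodule.subset_span hy) rfl
      have hcard' : t.card ≤ k := by
        refine le_trans htcard ?_
        rw [Finset.card_erase_of_mem hx]
        omega
      refine ih ↥N'' _ _ t hcard' htspan ?_ hcnb''
      intro r hr y
      have : r • (y : N) = 0 := hkill r hr y
      exact Subtype.ext (by simpa using this)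

end Chase3

section Bridge

variable {R : Type u} [CommRing R]

lemma nontrivial_iff_equiv {α β : Type*} (e : α ≃ β) : Nontrivial α ↔ Nontrivial β :=
  ⟨fun h => e.symm.nontrivial, fun h => e.nontrivial⟩

lemma moduleCat_nontrivial_iff_not_isZero (X : ModuleCat.{u} R) :
    Nontrivial X ↔ ¬ CategoryTheory.Limits.IsZero X := by
  constructor
  · intro h hz
    obtain ⟨a, b, hab⟩ := h
    apply hab
    have h1 : (𝟙 X : X ⟶ X) = 0 := hz.eq_of_src _ _
    calc a = (𝟙 X : X ⟶ X) a := rfl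
    _ = (0 : X ⟶ X) a := by rw [h1]
    _ = (𝟙 X : X ⟶ X) b := by rw [h1]; rfl
    _ = b := rfl
  · intro h
    by_contra hn
    rw [not_nontrivial_iff_subsingleton] at hn
    exact h (ModuleCat.isZero_of_subsingleton X)

variable (M : ModuleCat.{u} R) (n : ℕ) (P : CategoryTheory.ProjectiveResolution M)

lemma bridge (A : Type u) [AddCommGroup A] [Module R A] :
    Nontrivial (TorM R n (ModuleCat.of R A) M) ↔
    CNB (R := R)
      (show ↥(P.complex.X (n+1)) →ₗ[R] ↥(P.complex.X n) from (P.complex.d (n+1) n).hom)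
      (show ↥(P.complex.X n) →ₗ[R] ↥(P.complex.X (n-1)) from (P.complex.d n (n-1)).hom) A := by
  set F := (CategoryTheory.MonoidalCategory.tensoringLeft (ModuleCat.{u} R)).obj
    (ModuleCat.of R A) with hF
  set KK := (F.mapHomologicalComplex (ComplexShape.down ℕ)).obj P.complex with hKK
  have e : TorM R n (ModuleCat.of R A) M ≅
      (HomologicalComplex.homologyFunctor (ModuleCat.{u} R) (ComplexShape.down ℕ) n).obj KK :=
    P.isoLeftDerivedObj F n
  rw [nontrivial_iff_equiv e.toLinearEquiv.toEquiv]
  rw [moduleCat_nontrivial_iff_not_isZero]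
  have h3 : (HomologicalComplex.homologyFunctor (ModuleCat.{u} R)
      (ComplexShape.down ℕ) n).obj KK = KK.homology n := rfl
  rw [h3, ← HomologicalComplex.exactAt_iff_isZero_homology]
  have h4 : KK.ExactAt n ↔ (KK.sc' (n+1) n (n-1)).Exact :=
    KK.exactAt_iff' (i := n+1) (j := n) (k := n-1) (by simp) (by cases n <;> simp)
  rw [h4, CategoryTheory.ShortComplex.moduleCat_exact_iff]
  push_neg
  constructor
  · rintro ⟨z, hz, hnb⟩
    refine ⟨z, hz, ?_⟩
    rintro ⟨w, hw⟩
    exact hnb w hw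
  · rintro ⟨z, hz, hnb⟩
    refine ⟨z, hz, ?_⟩
    intro w hw
    exact hnb ⟨w, hw⟩

end Bridge

/-- If `M` is a module over a local Gaussian ring with `wgd_R(M) = n` and
`Tor_n(R/I, M) ≠ 0`, then there is an ideal `J ⊇ I + D` with `Tor_n(R/J, M) ≠ 0`. -/
theorem exists_ideal_tor_ne_zero (R : Type u) [CommRing R] [IsLocalRing R] (hR : IsGaussian R)
    (D : Ideal R) (hD : ∀ x : R, x ∈ D ↔ x ^ 2 = 0)
    (M : ModuleCat.{u} R) (n : ℕ) (hM : wgdModule R M = (n : ℕ∞))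
    (I : Ideal R) (hI : Nontrivial (TorM R n (ModuleCat.of R (R ⧸ I)) M)) :
    ∃ J : Ideal R, I ⊔ D ≤ J ∧ Nontrivial (TorM R n (ModuleCat.of R (R ⧸ J)) M) := by
  classical
  obtain ⟨P⟩ := (inferInstance : CategoryTheory.HasProjectiveResolution M).out
  haveI hproj : Module.Projective R ↥(P.complex.X (n-1)) := by
    rw [IsProjective.iff_projective.{u,u}, ModuleCat.of_coe]
    infer_instance
  haveI : Module.Flat R ↥(P.complex.X (n-1)) := inferInstance
  set δ1 : ↥(P.complex.X (n+1)) →ₗ[R] ↥(P.complex.X n) := (P.complex.d (n+1) n).hom with hδ1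
  set δ0 : ↥(P.complex.X n) →ₗ[R] ↥(P.complex.X (n-1)) := (P.complex.d n (n-1)).hom with hδ0
  have hδ : δ0.comp δ1 = 0 := by
    have h := congrArg ModuleCat.Hom.hom (P.complex.d_comp_d (n+1) n (n-1))
    rw [ModuleCat.hom_comp] at h
    exact h
  have hDsq : ∀ a ∈ D, ∀ b ∈ D, a * b = 0 := fun a ha b hb =>
    gaussian_mul_eq_zero hR ((hD a).mp ha) ((hD b).mp hb)
  have hKK : ∀ r ∈ I ⊔ D, ∀ b ∈ I ⊔ D, r * b ∈ I := by
    intro r hr b hb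
    obtain ⟨i, hi, d, hd, rfl⟩ := Submodule.mem_sup.mp hr
    obtain ⟨i', hi', d', hd', rfl⟩ := Submodule.mem_sup.mp hb
    have hexp : (i + d) * (i' + d') = i * i' + i * d' + d * i' + d * d' := by ring
    rw [hexp, hDsq d hd d' hd', add_zero]
    exact Ideal.add_mem _ (Ideal.add_mem _ (Ideal.mul_mem_right _ _ hi)
      (Ideal.mul_mem_right _ _ hi)) (Ideal.mul_mem_left _ _ hi')
  by_cases htop : Nontrivial (TorM R n (ModuleCat.of R (R ⧸ (I ⊔ D))) M)
  · exact ⟨I ⊔ D, le_rfl, htop⟩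
  have hcnbI : CNB δ1 δ0 (R ⧸ I) := (bridge M n P (R ⧸ I)).mp hI
  have hnotC : ¬ CNB δ1 δ0 (R ⧸ (I ⊔ D)) := fun h => htop ((bridge M n P _).mpr h)
  set g : (R ⧸ I) →ₗ[R] (R ⧸ (I ⊔ D)) :=
    Submodule.mapQ I (I ⊔ D) LinearMap.id
      (by rw [Submodule.comap_id]; exact le_sup_left) with hg
  have hgs : Function.Surjective g := by
    intro c
    obtain ⟨r, rfl⟩ := Submodule.mkQ_surjective _ c
    refine ⟨Submodule.Quotient.mk r, ?_⟩
    rw [hg, Submodule.mkQ_apply, Submodule.mapQ_apply, LinearMap.id_apply]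
  have hexact : Function.Exact (LinearMap.ker g).subtype g := by
    rw [LinearMap.exact_iff, Submodule.range_subtype]
  have hA : CNB δ1 δ0 ↥(LinearMap.ker g) :=
    chase1 hδ (LinearMap.ker g).subtype g (Submodule.injective_subtype _) hexact hgs hnotC hcnbI
  have hkerkill : ∀ r ∈ I ⊔ D, ∀ y : ↥(LinearMap.ker g), r • y = 0 := by
    intro r hr y
    apply Subtype.ext
    obtain ⟨b, hb⟩ := Submodule.mkQ_surjective I y.1
    have hbK : b ∈ I ⊔ D := by
      have h0 : g y.1 = 0 := y.2
      rw [← hb, hg] at h0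
      rw [Submodule.mkQ_apply, Submodule.mapQ_apply, LinearMap.id_apply,
        Submodule.Quotient.mk_eq_zero] at h0
      exact h0
    have hsmul : r • (y.1 : R ⧸ I) = Submodule.Quotient.mk (r * b) := by
      rw [← hb, Submodule.mkQ_apply, ← Submodule.Quotient.mk_smul, smul_eq_mul]
    show r • (y.1 : R ⧸ I) = 0
    rw [hsmul, Submodule.Quotient.mk_eq_zero]
    exact hKK r hr b hbK
  obtain ⟨N', hfgN', hcnbN'⟩ := chase2 hA
  obtain ⟨s, hs⟩ := hfgN'
  obtain ⟨t, htc, hts⟩ := aux_fin N' s (fun y hy => hs ▸ Submodule.subset_span hy) hs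
  have hkill' : ∀ r ∈ I ⊔ D, ∀ x : ↥N', r • x = 0 := by
    intro r hr x
    apply Subtype.ext
    simp only [Submodule.coe_smul, ZeroMemClass.coe_zero]
    exact hkerkill r hr x.1
  obtain ⟨J, hJK, hcnbJ⟩ := chase3 hδ (I ⊔ D) t.card ↥N' _ _ t le_rfl hts hkill' hcnbN'
  exact ⟨J, hJK, (bridge M n P _).mpr hcnbJ⟩
end
end

section
/- Let (R, m) be a local Gaussian ring, let D = {x ∈ R : x² = 0}, and let M be an R-module. If wgd_R(M) = n ≥ 1, then Tor_n^R(R/D, M) = 0. -/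
open CategoryTheory Polynomial

universe u

noncomputable section

/-! ### Auxiliary lemmas -/

open Finsupp TensorProduct MonoidalCategory
open scoped Classical

namespace TorAux

variable {R : Type u} [CommRing R]

lemma sum_smul_mem_smul {M : Type*} [AddCommGroup M] [Module R M] {I : Ideal R}
    {N : Submodule R M} {ι : Type*} (s : Finset ι) {d : ι → R} {f : ι → M}
    (hd : ∀ i ∈ s, d i ∈ I) (hf : ∀ i ∈ s, f i ∈ N) :
    ∑ i ∈ s, d i • f i ∈ I • N :=
  Submodule.sum_mem _ fun i hi => Submodule.smul_mem_smul (hd i hi) (hf i hi)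

lemma mem_smul_rep {M : Type*} [AddCommGroup M] [Module R M] {I : Ideal R}
    {N : Submodule R M} {x : M} (h : x ∈ I • N) :
    ∃ (ι : Type u) (_ : Fintype ι) (d : ι → R) (f : ι → M),
      (∀ i, d i ∈ I) ∧ (∀ i, f i ∈ N) ∧ x = ∑ i, d i • f i := by
  refine Submodule.smul_induction_on h ?_ ?_
  · intro r hr n hn
    exact ⟨PUnit, inferInstance, fun _ => r, fun _ => n, fun _ => hr, fun _ => hn, by simp⟩
  · rintro x y ⟨ι₁, _, d₁, f₁, hd₁, hf₁, rfl⟩ ⟨ι₂, _, d₂, f₂, hd₂, hf₂, rfl⟩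
    refine ⟨ι₁ ⊕ ι₂, inferInstance, Sum.elim d₁ d₂, Sum.elim f₁ f₂,
      fun i => by cases i <;> simp [hd₁, hd₂],
      fun i => by cases i <;> simp [hf₁, hf₂], ?_⟩
    rw [Fintype.sum_sum_type]
    simp

/-- The key module-theoretic lemma: if `T` is flat, `inc : T →ₗ F` is injective, `D` is an
ideal with `D • D = 0` containing all square-zero elements, and `inc v ∈ D • F`,
then `v ∈ D • T`. -/
lemma core_flat {T F : Type u} [AddCommGroup T] [Module R T] [Module.Flat R T]
    [AddCommGroup F] [Module R F] (D : Ideal R)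
    (hDmem : ∀ x : R, x * x = 0 → x ∈ D) (hD2 : ∀ d ∈ D, ∀ e ∈ D, d * e = 0)
    (inc : T →ₗ[R] F) (hinc : Function.Injective inc) (v : T)
    (hv : inc v ∈ D • (⊤ : Submodule R F)) : v ∈ D • (⊤ : Submodule R T) := by
  obtain ⟨ι, _, d, f, hdD, -, hrep⟩ := mem_smul_rep hv
  have hdv : ∀ j, d j • v = 0 := by
    intro j
    apply hinc
    rw [map_smul, hrep, map_zero, Finset.smul_sum]
    refine Finset.sum_eq_zero fun i _ => ?_
    rw [smul_smul, hD2 _ (hdD j) _ (hdD i), zero_smul]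
  have h1 : (LinearMap.toSpanSingleton R T v) ∘ₗ (linearCombination R d) = 0 := by
    apply Finsupp.lhom_ext
    intro i r
    simp only [LinearMap.comp_apply, linearCombination_single, LinearMap.zero_apply,
      LinearMap.toSpanSingleton_apply]
    rw [smul_assoc, hdv i, smul_zero]
  obtain ⟨κ, a, y, hxy, haf⟩ :=
    Module.Flat.exists_factorization_of_comp_eq_zero_of_free h1
  set w : Fin κ →₀ R := a 1 with hw
  have hvyw : v = y w := by
    have := LinearMap.congr_fun hxy 1
    simpa [LinearMap.toSpanSingleton] using this
  have hdw : ∀ j u, d j * w u = 0 := by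
    intro j u
    have h0 := LinearMap.congr_fun haf (single j 1)
    simp only [LinearMap.comp_apply, linearCombination_single, one_smul,
      LinearMap.zero_apply] at h0
    have : a (d j) = d j • w := by
      rw [hw, ← map_smul]; norm_num
    rw [this] at h0
    have := DFunLike.congr_fun h0 u
    simpa using this
  have hwv : ∀ u, w u • v = 0 := by
    intro u
    apply hinc
    rw [map_smul, hrep, map_zero, Finset.smul_sum]
    refine Finset.sum_eq_zero fun i _ => ?_
    rw [smul_smul, mul_comm, hdw i u, zero_smul]
  have h2 : y ∘ₗ (linearCombination R (fun u : Fin κ => w u • w)) = 0 := by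
    apply Finsupp.lhom_ext
    intro u r
    simp only [LinearMap.comp_apply, linearCombination_single, LinearMap.zero_apply]
    rw [map_smul, map_smul, ← hvyw]
    rw [hwv u, smul_zero]
  obtain ⟨κ', a', y', hyy', ha'f'⟩ :=
    Module.Flat.exists_factorization_of_comp_eq_zero_of_free h2
  set β : Fin κ' →₀ R := a' w with hβ
  have hvy'β : v = y' β := by
    rw [hvyw, hyy']; rfl
  have hwβ : ∀ u s, w u * β s = 0 := by
    intro u s
    have h0 := LinearMap.congr_fun ha'f' (single u 1)
    simp only [LinearMap.comp_apply, linearCombination_single, one_smul,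
      LinearMap.zero_apply, map_smul] at h0
    have := DFunLike.congr_fun h0 s
    simpa [hβ] using this
  have hβD : ∀ s, β s ∈ D := by
    intro s
    apply hDmem
    have hβexp : β s = ∑ u ∈ w.support, w u * (a' (single u 1)) s := by
      conv_lhs => rw [hβ, ← Finsupp.sum_single w]
      rw [Finsupp.sum, map_sum]
      rw [Finsupp.finset_sum_apply]
      refine Finset.sum_congr rfl fun u _ => ?_
      have : single u (w u) = w u • single u (1 : R) := by
        rw [Finsupp.smul_single, smul_eq_mul, mul_one]
      rw [this, map_smul]
      rfl
    calc β s * β s = (∑ u ∈ w.support, w u * (a' (single u 1)) s) * β s := by rw [← hβexp]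
      _ = ∑ u ∈ w.support, (a' (single u 1)) s * (w u * β s) := by
          rw [Finset.sum_mul]; exact Finset.sum_congr rfl fun u _ => by ring
      _ = 0 := Finset.sum_eq_zero fun u _ => by rw [hwβ u s, mul_zero]
  have hexp : y' β = ∑ s ∈ β.support, y' (single s (β s)) := by
    conv_lhs => rw [← Finsupp.sum_single β]
    rw [Finsupp.sum, map_sum]
  rw [hvy'β, hexp]
  refine Submodule.sum_mem _ fun s _ => ?_
  have : single s (β s) = β s • single s (1 : R) := by
    rw [Finsupp.smul_single, smul_eq_mul, mul_one]
  rw [this, map_smul]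
  exact Submodule.smul_mem_smul (hβD s) trivial

lemma span_range_smul_rep {Q : Type u} [AddCommGroup Q] [Module R Q]
    {K : Submodule R Q} {ι : Type*} [Fintype ι] {g : ι → R} {q : Q}
    (h : q ∈ (Ideal.span (Set.range g)) • K) :
    ∃ c : ι → Q, (∀ i, c i ∈ K) ∧ q = ∑ i, g i • c i := by
  have base : ∀ r ∈ Ideal.span (Set.range g), ∀ k ∈ K,
      ∃ c : ι → Q, (∀ i, c i ∈ K) ∧ r • k = ∑ i, g i • c i := by
    intro r hr
    induction hr using Submodule.span_induction with
    | mem r hrng =>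
      obtain ⟨i₀, rfl⟩ := hrng
      intro k hk
      refine ⟨fun i => if i = i₀ then k else 0,
        fun i => by by_cases h : i = i₀ <;> simp [h, hk], ?_⟩
      rw [Finset.sum_eq_single i₀] <;> simp +contextual
    | zero => intro k hk; exact ⟨0, by simp, by simp⟩
    | add r₁ r₂ _ _ ih₁ ih₂ =>
      intro k hk
      obtain ⟨c₁, hc₁, he₁⟩ := ih₁ k hk
      obtain ⟨c₂, hc₂, he₂⟩ := ih₂ k hk
      exact ⟨c₁ + c₂, fun i => Submodule.add_mem _ (hc₁ i) (hc₂ i), by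
        simp [add_smul, he₁, he₂, smul_add, Finset.sum_add_distrib]⟩
    | smul a r _ ih =>
      intro k hk
      obtain ⟨c, hc, he⟩ := ih k hk
      refine ⟨fun i => a • c i, fun i => Submodule.smul_mem _ _ (hc i), ?_⟩
      rw [smul_assoc, he, Finset.smul_sum]
      exact Finset.sum_congr rfl fun i _ => smul_comm a (g i) (c i)
  refine Submodule.smul_induction_on h (fun r hr k hk => base r hr k hk) ?_
  rintro x y ⟨c₁, hc₁, rfl⟩ ⟨c₂, hc₂, rfl⟩
  exact ⟨c₁ + c₂, fun i => Submodule.add_mem _ (hc₁ i) (hc₂ i), by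
    simp [smul_add, Finset.sum_add_distrib]⟩

/-- If `Q` is flat and `K ≤ Q` satisfies `K ∩ I•Q = I•K` for all ideals `I`,
then `Q ⧸ K` is flat. -/
lemma flat_of_pure {Q : Type u} [AddCommGroup Q] [Module R Q] [Module.Flat R Q]
    (K : Submodule R Q)
    (hpure : ∀ I : Ideal R, ∀ q ∈ K, q ∈ I • (⊤ : Submodule R Q) → q ∈ I • K) :
    Module.Flat R (Q ⧸ K) := by
  apply Module.Flat.of_forall_exists_factorization
  intro l g x hxg
  have hms := fun i : Fin l => Submodule.Quotient.mk_surjective K (x (single i 1))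
  choose s hs using hms
  set xt : (Fin l →₀ R) →ₗ[R] Q := linearCombination R s with hxt
  have hlift : K.mkQ ∘ₗ xt = x := by
    apply Finsupp.lhom_ext
    intro i r
    have : single i r = r • single i (1 : R) := by rw [Finsupp.smul_single, smul_eq_mul, mul_one]
    rw [this, map_smul, map_smul, LinearMap.comp_apply]
    rw [hxt]
    simp only [linearCombination_single, one_smul, map_smul]
    rw [Submodule.mkQ_apply, hs i]
  set q : Q := xt g with hq
  have hqK : q ∈ K := by
    have : K.mkQ q = 0 := by
      rw [hq, ← LinearMap.comp_apply, hlift, hxg]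
    rwa [← LinearMap.mem_ker, Submodule.ker_mkQ] at this
  set I : Ideal R := Ideal.span (Set.range (g : Fin l → R)) with hI
  have hqI : q ∈ I • (⊤ : Submodule R Q) := by
    rw [hq, hxt, linearCombination_apply, Finsupp.sum]
    refine sum_smul_mem_smul _ ?_ (by simp)
    intro i _
    exact Ideal.subset_span ⟨i, rfl⟩
  obtain ⟨c, hcK, hrep⟩ := span_range_smul_rep (hpure I q hqK hqI)
  set xh : (Fin l →₀ R) →ₗ[R] Q := linearCombination R (fun i => s i - c i) with hxh
  have hxhg : xh g = 0 := by
    rw [hxh, linearCombination_apply, Finsupp.sum]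
    have h1 : ∑ i ∈ g.support, g i • (s i - c i)
        = (∑ i ∈ g.support, g i • s i) - ∑ i ∈ g.support, g i • c i := by
      rw [← Finset.sum_sub_distrib]
      exact Finset.sum_congr rfl fun i _ => smul_sub _ _ _
    rw [h1]
    have h2 : ∑ i ∈ g.support, g i • s i = q := by
      rw [hq, hxt, linearCombination_apply, Finsupp.sum]
    have h3 : ∑ i ∈ g.support, g i • c i = ∑ i, g i • c i := by
      refine Finset.sum_subset (Finset.subset_univ _) ?_
      intro i _ hi
      rw [Finsupp.notMem_support_iff.mp hi, zero_smul]
    rw [h2, h3, ← hrep, sub_self]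
  obtain ⟨κ, a, y, hfac, hag⟩ := Module.Flat.exists_factorization_of_apply_eq_zero_of_free hxhg
  refine ⟨κ, a, K.mkQ ∘ₗ y, ?_, hag⟩
  have hlift2 : K.mkQ ∘ₗ xh = x := by
    apply Finsupp.lhom_ext
    intro i r
    have : single i r = r • single i (1 : R) := by rw [Finsupp.smul_single, smul_eq_mul, mul_one]
    rw [this, map_smul, map_smul, LinearMap.comp_apply, hxh]
    simp only [linearCombination_single, one_smul, map_smul]
    rw [Submodule.mkQ_apply, Submodule.Quotient.mk_sub,
      (Submodule.Quotient.mk_eq_zero _).mpr (hcK i), sub_zero, hs i]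
  rw [← hlift2, hfac, LinearMap.comp_assoc]

lemma gaussian_sq_zero_mul (hR : IsGaussian R)
    {d e : R} (hd : d * d = 0) (he : e * e = 0) : d * e = 0 := by
  set f : R[X] := C d * X + C e with hf
  set g : R[X] := C d * X - C e with hg
  have hfg : f * g = 0 := by
    have : f * g = C (d * d) * X ^ 2 - C (e * e) := by
      rw [hf, hg, map_mul, map_mul]; ring
    rw [this, hd, he]; simp
  have hcont := hR f g
  rw [hfg] at hcont
  have hzero : _root_.contentIdeal (0 : R[X]) = ⊥ := by
    rw [_root_.contentIdeal, Ideal.span_eq_bot]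
    rintro x ⟨n, rfl⟩
    simp
  rw [hzero] at hcont
  have hdmem : d ∈ _root_.contentIdeal f := by
    have : f.coeff 1 = d := by rw [hf]; simp
    exact this ▸ Ideal.subset_span ⟨1, rfl⟩
  have hemem : -e ∈ _root_.contentIdeal g := by
    have : g.coeff 0 = -e := by rw [hg]; simp
    exact this ▸ Ideal.subset_span ⟨0, rfl⟩
  have hmm : d * (-e) ∈ _root_.contentIdeal f * _root_.contentIdeal g := Ideal.mul_mem_mul hdmem hemem
  rw [← hcont] at hmm
  have h0 : d * (-e) = 0 := by simpa using hmm
  have h1 : -(d * e) = 0 := by rw [← h0]; ring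
  exact neg_eq_zero.mp h1

lemma one_tmul_eq_zero_iff {X : Type u} [AddCommGroup X] [Module R X] (I : Ideal R)
    (x : X) : (1 : R ⧸ I) ⊗ₜ[R] x = 0 ↔ x ∈ I • (⊤ : Submodule R X) := by
  constructor
  · intro h
    have := congrArg (quotTensorEquivQuotSMul X I) h
    rw [map_zero] at this
    have h1 : (1 : R ⧸ I) = Ideal.Quotient.mk I 1 := rfl
    rw [h1, quotTensorEquivQuotSMul_mk_tmul, one_smul] at this
    rwa [← Submodule.Quotient.mk_eq_zero]
  · intro h
    have := congrArg (quotTensorEquivQuotSMul X I).symm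
      ((Submodule.Quotient.mk_eq_zero _).mpr h)
    rw [map_zero] at this
    rw [← this]
    have h1 : (1 : R ⧸ I) = Ideal.Quotient.mk I 1 := rfl
    rw [h1, ← one_smul R x, ← quotTensorEquivQuotSMul_mk_tmul I 1 x, LinearEquiv.symm_apply_apply,
      one_smul]

lemma one_tmul_surjective {X : Type u} [AddCommGroup X] [Module R X] (I : Ideal R)
    (ξ : (R ⧸ I) ⊗[R] X) : ∃ x : X, (1 : R ⧸ I) ⊗ₜ[R] x = ξ := by
  induction ξ with
  | zero => exact ⟨0, by simp⟩
  | tmul r x =>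
    obtain ⟨r, rfl⟩ := Ideal.Quotient.mk_surjective r
    refine ⟨r • x, ?_⟩
    rw [← smul_tmul]
    congr 1
    rw [← Algebra.algebraMap_eq_smul_one, Ideal.Quotient.algebraMap_eq]
  | add ξ₁ ξ₂ ih₁ ih₂ =>
    obtain ⟨x₁, rfl⟩ := ih₁
    obtain ⟨x₂, rfl⟩ := ih₂
    exact ⟨x₁ + x₂, by rw [tmul_add]⟩

section bridge
variable {M : ModuleCat.{u} R} (P : ProjectiveResolution M)

/-- The complex obtained by tensoring a projective resolution with `A`. -/
abbrev mappedCx (A : ModuleCat.{u} R) :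
    HomologicalComplex (ModuleCat.{u} R) (ComplexShape.down ℕ) :=
  (((tensoringLeft (ModuleCat.{u} R)).obj A).mapHomologicalComplex (ComplexShape.down ℕ)).obj
    P.complex

lemma bridge_subsingleton_iff (A : ModuleCat.{u} R) (j : ℕ) :
    Subsingleton (TorM R j A M) ↔ (mappedCx P A).ExactAt j := by
  have e : TorM R j A M ≅ (mappedCx P A).homology j :=
    P.isoLeftDerivedObj ((tensoringLeft (ModuleCat.{u} R)).obj A) j
  rw [HomologicalComplex.exactAt_iff_isZero_homology]
  constructor
  · intro h
    exact (ModuleCat.isZero_of_subsingleton (TorM R j A M)).of_iso e.symm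
  · intro h
    have hz : Limits.IsZero (TorM R j A M) := h.of_iso e
    have hid : 𝟙 (TorM R j A M) = 0 := hz.eq_of_src _ _
    refine ⟨fun a b => ?_⟩
    have ha : a = 0 := by
      conv_lhs => rw [← ModuleCat.id_apply _ a, hid]
      rfl
    have hb : b = 0 := by
      conv_lhs => rw [← ModuleCat.id_apply _ b, hid]
      rfl
    rw [ha, hb]

/-- Elementwise meaning of exactness of the complex `(R⧸I) ⊗ P` at `j+1`. -/
lemma mapped_exactAt_succ_iff (I : Ideal R) (j : ℕ) :
    (mappedCx P (ModuleCat.of R (R ⧸ I))).ExactAt (j+1) ↔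
      ∀ z : P.complex.X (j+1), P.complex.d (j+1) j z ∈ I • (⊤ : Submodule R (P.complex.X j)) →
        ∃ w : P.complex.X (j+2),
          z - P.complex.d (j+2) (j+1) w ∈ I • (⊤ : Submodule R (P.complex.X (j+1))) := by
  rw [HomologicalComplex.exactAt_iff' _ (j+2) (j+1) j (by simp) (by simp),
    ShortComplex.moduleCat_exact_iff]
  constructor
  · intro h z hz
    set ξ : (R ⧸ I) ⊗[R] (P.complex.X (j+1)) := (1 : R ⧸ I) ⊗ₜ[R] z with hξ
    have hgξ : ((mappedCx P (ModuleCat.of R (R ⧸ I))).sc' (j+2) (j+1) j).g ξ = 0 := by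
      show (ModuleCat.of R (R ⧸ I) ◁ (P.complex.d (j+1) j)) ξ = 0
      rw [hξ, ModuleCat.MonoidalCategory.whiskerLeft_apply]
      exact (one_tmul_eq_zero_iff I _).mpr hz
    obtain ⟨η, hη⟩ := h ξ hgξ
    obtain ⟨w, hw⟩ := one_tmul_surjective I η
    refine ⟨w, ?_⟩
    rw [← one_tmul_eq_zero_iff I, tmul_sub]
    have : ((mappedCx P (ModuleCat.of R (R ⧸ I))).sc' (j+2) (j+1) j).f η
        = (1 : R ⧸ I) ⊗ₜ[R] (P.complex.d (j+2) (j+1) w) := by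
      rw [← hw]
      show (ModuleCat.of R (R ⧸ I) ◁ (P.complex.d (j+2) (j+1))) _ = _
      rw [ModuleCat.MonoidalCategory.whiskerLeft_apply]
    rw [← this, hη, hξ, sub_self]
  · intro h ξ hξ
    obtain ⟨z, rfl⟩ := one_tmul_surjective I ξ
    have hz : P.complex.d (j+1) j z ∈ I • (⊤ : Submodule R (P.complex.X j)) := by
      rw [← one_tmul_eq_zero_iff I]
      have : ((mappedCx P (ModuleCat.of R (R ⧸ I))).sc' (j+2) (j+1) j).g ((1 : R ⧸ I) ⊗ₜ[R] z)
          = (1 : R ⧸ I) ⊗ₜ[R] (P.complex.d (j+1) j z) := by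
        show (ModuleCat.of R (R ⧸ I) ◁ (P.complex.d (j+1) j)) _ = _
        rw [ModuleCat.MonoidalCategory.whiskerLeft_apply]
      rw [← this, hξ]
      rfl
    obtain ⟨w, hw⟩ := h z hz
    refine ⟨(1 : R ⧸ I) ⊗ₜ[R] w, ?_⟩
    show (ModuleCat.of R (R ⧸ I) ◁ (P.complex.d (j+2) (j+1))) _ = _
    rw [ModuleCat.MonoidalCategory.whiskerLeft_apply]
    have h0 := (one_tmul_eq_zero_iff I _).mpr hw
    rw [tmul_sub] at h0
    exact (sub_eq_zero.mp h0).symm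

end bridge

end TorAux

open TorAux

/-- If `M` is a module over a local Gaussian ring with `wgd_R(M) = n ≥ 1`,
then `Tor_n(R/D, M) = 0`. -/
theorem tor_quotient_D_eq_zero (R : Type u) [CommRing R] [IsLocalRing R] (hR : IsGaussian R)
    (D : Ideal R) (hD : ∀ x : R, x ∈ D ↔ x ^ 2 = 0)
    (M : ModuleCat.{u} R) (n : ℕ) (hn : 1 ≤ n) (hM : wgdModule R M = (n : ℕ∞)) :
    Subsingleton (TorM R n (ModuleCat.of R (R ⧸ D)) M) := by
  classical
  obtain ⟨m, rfl⟩ : ∃ m, n = m + 1 := ⟨n - 1, by omega⟩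
  have hDmem : ∀ x : R, x * x = 0 → x ∈ D := fun x hx => (hD x).mpr (by rw [pow_two]; exact hx)
  have hD2 : ∀ d ∈ D, ∀ e ∈ D, d * e = 0 := fun d hd e he =>
    gaussian_sq_zero_mul hR (by rw [← pow_two]; exact (hD d).mp hd)
      (by rw [← pow_two]; exact (hD e).mp he)
  -- a projective resolution of M
  let P : ProjectiveResolution M := (HasProjectiveResolution.out (Z := M)).some
  -- all Tor's in degree n+1 vanish
  have hvan : ∀ A : ModuleCat.{u} R, Subsingleton (TorM R (m + 1 + 1) A M) := by
    intro A
    by_contra hcon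
    rw [not_subsingleton_iff_nontrivial] at hcon
    have hmem : ((m + 1 + 1 : ℕ) : ℕ∞) ∈
        ((↑) '' {d : ℕ | ∃ A : ModuleCat.{u} R, Nontrivial (TorM R d A M)}) :=
      Set.mem_image_of_mem _ ⟨A, hcon⟩
    have hle := le_sSup hmem
    rw [← wgdModule, hM] at hle
    exact absurd (Nat.cast_le.mp hle) (by omega)
  -- elementwise exactness in degree m+2, for every ideal I
  have hex : ∀ I : Ideal R, ∀ z : P.complex.X (m + 2),
      P.complex.d (m + 2) (m + 1) z ∈ I • (⊤ : Submodule R (P.complex.X (m + 1))) →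
      ∃ w : P.complex.X (m + 3),
        z - P.complex.d (m + 3) (m + 2) w ∈ I • (⊤ : Submodule R (P.complex.X (m + 2))) := by
    intro I
    exact (mapped_exactAt_succ_iff P I (m + 1)).mp
      ((bridge_subsingleton_iff P _ (m + 2)).mp (hvan _))
  -- notation
  set d10 : P.complex.X (m + 1) ⟶ P.complex.X m := P.complex.d (m + 1) m with hd10
  set d21 : P.complex.X (m + 2) ⟶ P.complex.X (m + 1) := P.complex.d (m + 2) (m + 1) with hd21
  set K : Submodule R (P.complex.X (m + 1)) := LinearMap.ker d10.hom with hK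
  -- exactness of the resolution at m+1, in module terms
  have hKrange : LinearMap.range d21.hom = K := by
    have hexact := P.complex_exactAt_succ m
    rw [HomologicalComplex.exactAt_iff' _ (m + 2) (m + 1) m (by simp) (by simp),
      ShortComplex.moduleCat_exact_iff_range_eq_ker] at hexact
    exact hexact
  -- purity of K ≤ X(m+1)
  have hpure : ∀ I : Ideal R, ∀ q ∈ K, q ∈ I • (⊤ : Submodule R (P.complex.X (m + 1))) →
      q ∈ I • K := by
    intro I q hqK hqI
    rw [← hKrange] at hqK
    obtain ⟨z, rfl⟩ := hqK
    obtain ⟨w, hw⟩ := hex I z hqI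
    have hzw : d21 z = d21 (z - P.complex.d (m + 3) (m + 2) w) := by
      rw [map_sub]
      have hdd : d21 (P.complex.d (m + 3) (m + 2) w) = 0 := by
        have := P.complex.d_comp_d (m + 3) (m + 2) (m + 1)
        calc d21 (P.complex.d (m + 3) (m + 2) w)
            = (P.complex.d (m + 3) (m + 2) ≫ d21) w := rfl
          _ = 0 := by rw [hd21, this]; rfl
      rw [hdd, sub_zero]
    rw [hzw]
    obtain ⟨ι, _, a, t, haI, -, hrep⟩ := mem_smul_rep hw
    rw [hrep, map_sum]
    refine Submodule.sum_mem _ fun i _ => ?_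
    rw [map_smul]
    refine Submodule.smul_mem_smul (haI i) ?_
    rw [← hKrange]
    exact ⟨t i, rfl⟩
  -- flatness
  have hprojX1 : Module.Projective R (P.complex.X (m + 1)) := by
    rw [IsProjective.iff_projective]
    rw [ModuleCat.of_coe]
    infer_instance
  have hflatX1 : Module.Flat R (P.complex.X (m + 1)) := by
    haveI := hprojX1
    exact Module.Flat.of_projective
  have hflatQ : Module.Flat R ((P.complex.X (m + 1)) ⧸ K) := flat_of_pure K hpure
  have hflatT : Module.Flat R ↥(LinearMap.range d10.hom) :=
    Module.Flat.of_linearEquiv (LinearMap.quotKerEquivRange d10.hom).symm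
  -- now prove the goal via the elementwise description
  rw [bridge_subsingleton_iff P _ (m + 1), mapped_exactAt_succ_iff P D m]
  intro z hz
  set T : Submodule R (P.complex.X m) := LinearMap.range d10.hom with hT
  have hcore := core_flat D hDmem hD2 T.subtype (Submodule.injective_subtype T)
    ⟨d10 z, ⟨z, rfl⟩⟩ (by simpa using hz)
  obtain ⟨ι, _, δ, t, hδD, -, hrep⟩ := mem_smul_rep hcore
  choose ufun hufun using fun i => (t i).2
  have hdz : d10 z = ∑ i, δ i • d10 (ufun i) := by
    have hval := congrArg (T.subtype) hrep
    rw [map_sum] at hval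
    simp only [map_smul] at hval
    calc d10 z = T.subtype ⟨d10 z, ⟨z, rfl⟩⟩ := rfl
      _ = ∑ i, δ i • T.subtype (t i) := hval
      _ = ∑ i, δ i • d10 (ufun i) := by
          exact Finset.sum_congr rfl fun i _ => by rw [hufun i]; rfl
  have hker : z - ∑ i, δ i • ufun i ∈ K := by
    rw [hK, LinearMap.mem_ker, map_sub, map_sum]
    simp only [map_smul]
    rw [hdz, sub_self]
  rw [← hKrange] at hker
  obtain ⟨w, hwk⟩ := hker
  refine ⟨w, ?_⟩
  have : z - P.complex.d (m + 2) (m + 1) w = ∑ i, δ i • ufun i := by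
    have : (P.complex.d (m + 2) (m + 1)) w = d21 w := rfl
    rw [this, hwk]
    abel
  rw [this]
  exact sum_smul_mem_smul _ (fun i _ => hδD i) (fun i _ => trivial)
end
end

section
/- Let (R, m) be a local Gaussian ring such that every element of m is a zero divisor, and let M be an R-module. If wgd_R(M) = n ≥ 1, then Tor_n^R(R/m, M) = 0. -/
open CategoryTheory Polynomial

universe u

noncomputable section

section Aux

open TensorProduct LinearMap

variable {R : Type u} [CommRing R]

lemma coeff_mem_contentIdeal (f : R[X]) (k : ℕ) : f.coeff k ∈ _root_.contentIdeal f :=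
  Ideal.subset_span ⟨k, rfl⟩

/-- Tsang-type comparability lemma. -/
lemma sq_mem_or_sq_mem [IsLocalRing R] (hR : IsGaussian R) (a b : R) :
    b ^ 2 ∈ Ideal.span {a} ∨ a ^ 2 ∈ Ideal.span {b} := by
  set f : R[X] := C a * X + C b with hf
  set g : R[X] := C b * X + C a with hg
  have ha : a ∈ _root_.contentIdeal f := by
    simpa [hf, coeff_add, coeff_C_mul, coeff_C] using _root_.coeff_mem_contentIdeal f 1
  have hb : b ∈ _root_.contentIdeal g := by
    simpa [hg, coeff_add, coeff_C_mul, coeff_C] using _root_.coeff_mem_contentIdeal g 1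
  have ha' : a ∈ _root_.contentIdeal g := by
    simpa [hg, coeff_add, coeff_C_mul, coeff_C] using _root_.coeff_mem_contentIdeal g 0
  have hb' : b ∈ _root_.contentIdeal f := by
    simpa [hf, coeff_add, coeff_C_mul, coeff_C] using _root_.coeff_mem_contentIdeal f 0
  have hca : a ^ 2 ∈ _root_.contentIdeal (f * g) := by
    rw [hR, pow_two]; exact Ideal.mul_mem_mul ha ha'
  have hcb : b ^ 2 ∈ _root_.contentIdeal (f * g) := by
    rw [hR, pow_two]; exact Ideal.mul_mem_mul hb' hb
  have hfg : f * g = C (a * b) * X ^ 2 + C (a ^ 2 + b ^ 2) * X + C (a * b) := by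
    rw [hf, hg]; simp only [map_mul, map_add, map_pow]; ring
  have hle : _root_.contentIdeal (f * g) ≤ Ideal.span {a * b, a ^ 2 + b ^ 2} := by
    rw [_root_.contentIdeal, Ideal.span_le]
    rintro - ⟨k, rfl⟩
    rw [hfg]
    have hab : a * b ∈ Ideal.span ({a * b, a ^ 2 + b ^ 2} : Set R) :=
      Ideal.subset_span (by simp)
    have hab2 : a ^ 2 + b ^ 2 ∈ Ideal.span ({a * b, a ^ 2 + b ^ 2} : Set R) :=
      Ideal.subset_span (by simp)
    match k with
    | 0 =>
      simp only [coeff_add, coeff_C_mul, coeff_X_pow, coeff_X, coeff_C]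
      norm_num
      exact hab
    | 1 =>
      simp only [coeff_add, coeff_C_mul, coeff_X_pow, coeff_X, coeff_C]
      norm_num
      exact hab2
    | 2 =>
      simp only [coeff_add, coeff_C_mul, coeff_X_pow, coeff_X, coeff_C]
      norm_num
      exact hab
    | (k+3) =>
      simp only [coeff_add, coeff_C_mul, coeff_X_pow, coeff_X, coeff_C,
        if_neg (show ¬(k+3 = 2) by omega), if_neg (show ¬(1 = k+3) by omega),
        if_neg (show ¬(k+3 = 0) by omega)]
      norm_num
  obtain ⟨lam, mu, hmu⟩ := Ideal.mem_span_pair.mp (hle hca)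
  obtain ⟨lam', mu', hmu'⟩ := Ideal.mem_span_pair.mp (hle hcb)
  by_cases hu : IsUnit mu
  · left
    rw [Ideal.mem_span_singleton]
    obtain ⟨u, hu⟩ := hu
    have h2 : (u : R) * b ^ 2 = a * (a - lam * b - mu * a) := by
      rw [hu]; linear_combination hmu
    refine ⟨(↑u⁻¹ : R) * (a - lam * b - mu * a), ?_⟩
    calc b ^ 2 = (↑u⁻¹ : R) * ((u : R) * b ^ 2) := by
          rw [← mul_assoc, Units.inv_mul, one_mul]
      _ = a * ((↑u⁻¹ : R) * (a - lam * b - mu * a)) := by rw [h2]; ring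
  by_cases hu' : IsUnit mu'
  · right
    rw [Ideal.mem_span_singleton]
    obtain ⟨u, hu'⟩ := hu'
    have h2 : (u : R) * a ^ 2 = b * (b - lam' * a - mu' * b) := by
      rw [hu']; linear_combination hmu'
    refine ⟨(↑u⁻¹ : R) * (b - lam' * a - mu' * b), ?_⟩
    calc a ^ 2 = (↑u⁻¹ : R) * ((u : R) * a ^ 2) := by
          rw [← mul_assoc, Units.inv_mul, one_mul]
      _ = b * ((↑u⁻¹ : R) * (b - lam' * a - mu' * b)) := by rw [h2]; ring
  · left
    rw [Ideal.mem_span_singleton]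
    have hsum : ¬ IsUnit (mu + mu') := by
      intro h
      rcases IsLocalRing.isUnit_or_isUnit_of_isUnit_add h with h | h
      exacts [hu h, hu' h]
    have hv : IsUnit (1 - (mu + mu')) := by
      rcases IsLocalRing.isUnit_or_isUnit_one_sub_self (mu + mu') with h | h
      · exact absurd h hsum
      · exact h
    obtain ⟨v, hv⟩ := hv
    have h3 : (v : R) * (a ^ 2 + b ^ 2) = (lam + lam') * (a * b) := by
      rw [hv]; linear_combination - hmu - hmu'
    have h4 : a ^ 2 + b ^ 2 = (↑v⁻¹ : R) * ((lam + lam') * (a * b)) := by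
      rw [← h3, ← mul_assoc, Units.inv_mul, one_mul]
    exact ⟨(↑v⁻¹ : R) * (lam + lam') * b - a, by linear_combination h4⟩


open TensorProduct LinearMap


section TensorFacts

variable {M M' : Type u} [AddCommGroup M] [Module R M] [AddCommGroup M'] [Module R M']

lemma one_tmul_eq_zero_iff (I : Ideal R) (x : M) :
    (1 : R ⧸ I) ⊗ₜ[R] x = 0 ↔ x ∈ I • (⊤ : Submodule R M) := by
  rw [← (TensorProduct.quotTensorEquivQuotSMul M I).map_eq_zero_iff]
  have h2 : (1 : R ⧸ I) = Ideal.Quotient.mk I 1 := rfl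
  rw [h2, TensorProduct.quotTensorEquivQuotSMul_mk_tmul, one_smul,
    Submodule.Quotient.mk_eq_zero]

lemma exists_one_tmul_rep (I : Ideal R) (u : (R ⧸ I) ⊗[R] M) :
    ∃ x : M, u = (1 : R ⧸ I) ⊗ₜ[R] x := by
  induction u with
  | zero => exact ⟨0, (TensorProduct.tmul_zero _ _).symm⟩
  | tmul r x =>
    obtain ⟨r, rfl⟩ := Ideal.Quotient.mk_surjective r
    refine ⟨r • x, ?_⟩
    rw [← TensorProduct.smul_tmul]
    congr 1
    rw [Algebra.smul_def, mul_one, Ideal.Quotient.algebraMap_eq]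
  | add u v hu hv =>
    obtain ⟨x, rfl⟩ := hu
    obtain ⟨y, rfl⟩ := hv
    exact ⟨x + y, (TensorProduct.tmul_add _ _ _).symm⟩

lemma lid_rTensor_mem_smul_top (I : Ideal R) (η : I ⊗[R] M) :
    TensorProduct.lid R M (rTensor M I.subtype η) ∈ I • (⊤ : Submodule R M) := by
  induction η with
  | zero => simp
  | tmul i x =>
    simp only [rTensor_tmul, Submodule.coe_subtype, TensorProduct.lid_tmul]
    exact Submodule.smul_mem_smul i.2 trivial
  | add u v hu hv => rw [map_add, map_add]; exact add_mem hu hv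

lemma mem_smul_top_exists_rep (I : Ideal R) (x : M) (hx : x ∈ I • (⊤ : Submodule R M)) :
    ∃ η : I ⊗[R] M, TensorProduct.lid R M (rTensor M I.subtype η) = x := by
  refine Submodule.smul_induction_on hx (fun r hr n _ => ⟨(⟨r, hr⟩ : I) ⊗ₜ n, ?_⟩) ?_
  · simp
  · rintro x y ⟨η₁, rfl⟩ ⟨η₂, rfl⟩
    exact ⟨η₁ + η₂, by rw [map_add, map_add]⟩

lemma lid_lTensor (h : M →ₗ[R] M') (w : R ⊗[R] M) :
    TensorProduct.lid R M' (lTensor R h w) = h (TensorProduct.lid R M w) := by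
  induction w with
  | zero => simp
  | tmul r m => simp
  | add u v hu hv => simp [map_add, hu, hv]

end TensorFacts

section L1

variable {A B C : Type u} [AddCommGroup A] [Module R A] [AddCommGroup B] [Module R B]
  [AddCommGroup C] [Module R C]

lemma lTensor_subtype_injective_of_exact (e : A →ₗ[R] B) (f : B →ₗ[R] C)
    (hef : Function.Exact e f)
    (htens : ∀ (W : Type u) [AddCommGroup W] [Module R W],
      Function.Exact (lTensor W e) (lTensor W f))
    (W : Type u) [AddCommGroup W] [Module R W] :
    Function.Injective (lTensor W (LinearMap.range f).subtype) := by
  rw [← LinearMap.ker_eq_bot, eq_bot_iff]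
  intro ζ hζ
  rw [LinearMap.mem_ker] at hζ
  obtain ⟨x, rfl⟩ := lTensor_surjective W f.surjective_rangeRestrict ζ
  have hcomp : (LinearMap.range f).subtype ∘ₗ f.rangeRestrict = f := by ext b; rfl
  have hx : lTensor W f x = 0 := by
    rw [← hcomp, lTensor_comp, LinearMap.coe_comp, Function.comp_apply, hζ]
  obtain ⟨y, rfl⟩ := (htens W x).mp hx
  have hre : f.rangeRestrict ∘ₗ e = 0 := by
    ext a
    simpa using hef.apply_apply_eq_zero a
  rw [Submodule.mem_bot, ← LinearMap.comp_apply, ← lTensor_comp, hre, lTensor_zero,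
    LinearMap.zero_apply]

end L1

section L2

variable {C : Type u} [AddCommGroup C] [Module R C]

lemma flat_quotient_of_univ_injective [Module.Flat R C] (Z : Submodule R C)
    (hZ : ∀ (W : Type u) [AddCommGroup W] [Module R W],
      Function.Injective (lTensor W Z.subtype)) :
    Module.Flat R (C ⧸ Z) := by
  rw [Module.Flat.iff_rTensor_injective']
  intro I
  rw [← LinearMap.ker_eq_bot, eq_bot_iff]
  intro ξ hξ
  rw [LinearMap.mem_ker] at hξ
  obtain ⟨η, rfl⟩ := lTensor_surjective (↥I) (Submodule.mkQ_surjective Z) ξ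
  set x : C := TensorProduct.lid R C (rTensor C I.subtype η) with hxdef
  have hxI : x ∈ I • (⊤ : Submodule R C) := lid_rTensor_mem_smul_top I η
  -- x ∈ Z
  have hcomm : lTensor R Z.mkQ (rTensor C I.subtype η) = 0 := by
    have h1 : lTensor R Z.mkQ ∘ₗ rTensor C I.subtype =
        rTensor (C ⧸ Z) I.subtype ∘ₗ lTensor (↥I) Z.mkQ := by
      rw [lTensor_comp_rTensor, rTensor_comp_lTensor]
    have h2 := congrArg (fun φ => φ η) h1
    simp only [LinearMap.coe_comp, Function.comp_apply] at h2
    rw [h2, hξ]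
  have hxZ : x ∈ Z := by
    have : rTensor C I.subtype η ∈ LinearMap.range (lTensor R Z.subtype) := by
      rw [← lTensor_mkQ]
      exact hcomm
    obtain ⟨ω, hω⟩ := this
    rw [hxdef, ← hω, lid_lTensor]
    exact (TensorProduct.lid R Z ((ω : R ⊗[R] Z))).2
  set z₀ : Z := ⟨x, hxZ⟩ with hz₀
  -- z₀ ∈ I • ⊤ in Z
  have hz₀I : z₀ ∈ I • (⊤ : Submodule R Z) := by
    rw [← one_tmul_eq_zero_iff I z₀]
    apply hZ (R ⧸ I)
    rw [lTensor_tmul, map_zero]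
    show (1 : R ⧸ I) ⊗ₜ[R] x = 0
    rw [one_tmul_eq_zero_iff]
    exact hxI
  obtain ⟨η', hη'⟩ := mem_smul_top_exists_rep I z₀ hz₀I
  -- η = lTensor I Z.subtype η'
  have hkey : rTensor C I.subtype (lTensor (↥I) Z.subtype η') = rTensor C I.subtype η := by
    apply (TensorProduct.lid R C).injective
    have h1 : rTensor C I.subtype ∘ₗ lTensor (↥I) Z.subtype =
        lTensor R Z.subtype ∘ₗ rTensor Z I.subtype := by
      rw [rTensor_comp_lTensor, lTensor_comp_rTensor]
    have h2 := congrArg (fun φ => φ η') h1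
    simp only [LinearMap.coe_comp, Function.comp_apply] at h2
    rw [h2, lid_lTensor, hη']
    rfl
  have hflat : Function.Injective (rTensor C I.subtype) :=
    Module.Flat.rTensor_preserves_injective_linearMap I.subtype (Submodule.injective_subtype I)
  have hη : lTensor (↥I) Z.subtype η' = η := hflat hkey
  rw [Submodule.mem_bot, ← hη, ← LinearMap.comp_apply, ← lTensor_comp]
  have : Z.mkQ ∘ₗ Z.subtype = 0 := by ext z; simp
  rw [this, lTensor_zero, LinearMap.zero_apply]

end L2

section L3

variable {N : Type u} [AddCommGroup N] [Module R N]

lemma mem_ann_smul_of_smul_eq_zero [Module.Flat R N] (t : R) (z : N) (h : t • z = 0) :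
    z ∈ (LinearMap.ker (LinearMap.toSpanSingleton R R t)) • (⊤ : Submodule R N) := by
  set J := LinearMap.ker (LinearMap.toSpanSingleton R R t) with hJ
  have hex : Function.Exact J.subtype (LinearMap.toSpanSingleton R R t) :=
    (LinearMap.toSpanSingleton R R t).exact_subtype_ker_map
  have hex2 := Module.Flat.rTensor_exact (M := N) hex
  have h1 : rTensor N (LinearMap.toSpanSingleton R R t) ((1 : R) ⊗ₜ[R] z) = 0 := by
    rw [rTensor_tmul]
    apply (TensorProduct.lid R N).injective
    rw [map_zero, TensorProduct.lid_tmul, LinearMap.toSpanSingleton_apply, one_smul]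
    exact h
  obtain ⟨ω, hω⟩ := (hex2 _).mp h1
  have : z = TensorProduct.lid R N (rTensor N J.subtype ω) := by
    rw [hω]
    simp
  rw [this]
  exact lid_rTensor_mem_smul_top J ω

end L3

section AnnLemmas

lemma exists_pow_le_span_singleton [IsLocalRing R]
    (hG : ∀ a b : R, b ^ 2 ∈ Ideal.span {a} ∨ a ^ 2 ∈ Ideal.span {b}) (s : Finset R) :
    ∃ c ∈ Ideal.span (s : Set R), ∃ N : ℕ,
      (Ideal.span (s : Set R)) ^ (N + 1) ≤ Ideal.span {c} := by
  classical
  induction s using Finset.induction_on with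
  | empty =>
    exact ⟨0, zero_mem _, 0, by simp⟩
  | @insert a s ha IH =>
    obtain ⟨c, hc, N, hN⟩ := IH
    rw [Finset.coe_insert, Ideal.span_insert]
    set A := Ideal.span ({a} : Set R) with hA
    set J := Ideal.span (s : Set R) with hJ
    have hAA : A ^ 2 ≤ Ideal.span {a ^ 2} := by
      rw [pow_two, hA, Ideal.span_singleton_mul_span_singleton, ← pow_two]
    rcases hG a c with h | h
    · -- c^2 ∈ (a) : use a, exponent 2N+4
      refine ⟨a, Ideal.mem_sup_left (Ideal.subset_span rfl), 2 * N + 3, ?_⟩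
      have h1 : (A ⊔ J) ^ (2 + (2 * N + 2)) ≤ A ^ 2 ⊔ J ^ (2 * N + 2) :=
        Ideal.sup_pow_add_le_pow_sup_pow
      have he : 2 * N + 3 + 1 = 2 + (2 * N + 2) := by omega
      rw [he]
      refine h1.trans (sup_le ?_ ?_)
      · exact hAA.trans (Ideal.span_singleton_le_span_singleton.mpr (dvd_pow_self a two_ne_zero))
      · have h2 : J ^ (2 * N + 2) = (J ^ (N + 1)) ^ 2 := by rw [← pow_mul]; ring_nf
        rw [h2]
        refine (Ideal.pow_right_mono hN 2).trans ?_
        rw [pow_two, Ideal.span_singleton_mul_span_singleton, ← pow_two, Ideal.span_le]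
        simpa using h
    · -- a^2 ∈ (c) : keep c, exponent N+3
      refine ⟨c, Ideal.mem_sup_right hc, N + 2, ?_⟩
      have h1 : (A ⊔ J) ^ (2 + (N + 1)) ≤ A ^ 2 ⊔ J ^ (N + 1) :=
        Ideal.sup_pow_add_le_pow_sup_pow
      have he : N + 2 + 1 = 2 + (N + 1) := by omega
      rw [he]
      refine h1.trans (sup_le ?_ ?_)
      · exact hAA.trans (by rw [Ideal.span_le]; simpa using h)
      · exact hN

lemma exists_ann_of_fg [IsLocalRing R]
    (hG : ∀ a b : R, b ^ 2 ∈ Ideal.span {a} ∨ a ^ 2 ∈ Ideal.span {b})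
    (hzd : ∀ x ∈ IsLocalRing.maximalIdeal R, ∃ s : R, s ≠ 0 ∧ x * s = 0)
    (I : Ideal R) (hFG : I.FG) (hIm : I ≤ IsLocalRing.maximalIdeal R) :
    ∃ t : R, t ≠ 0 ∧ ∀ a ∈ I, t * a = 0 := by
  obtain ⟨s, rfl⟩ := hFG
  obtain ⟨c, hc, N, hN⟩ := exists_pow_le_span_singleton hG s
  obtain ⟨t, ht0, htc⟩ := hzd c (hIm hc)
  have key : ∀ x ∈ (Ideal.span (s : Set R)) ^ (N + 1), t * x = 0 := by
    intro x hx
    obtain ⟨r, rfl⟩ := Ideal.mem_span_singleton.mp (hN hx)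
    calc t * (c * r) = (c * t) * r := by ring
      _ = 0 := by rw [htc, zero_mul]
  clear hN hc htc
  induction N with
  | zero =>
    exact ⟨t, ht0, fun a ha => key a (by simpa using ha)⟩
  | succ N IH =>
    by_cases hall : ∀ x ∈ (Ideal.span (s : Set R)) ^ (N + 1), t * x = 0
    · exact IH hall
    · push_neg at hall
      obtain ⟨x, hx, hsx⟩ := hall
      refine ⟨t * x, hsx, fun a ha => ?_⟩
      have hxa : x * a ∈ (Ideal.span (s : Set R)) ^ (N + 2) := by
        rw [pow_succ]
        exact Ideal.mul_mem_mul hx ha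
      calc t * x * a = t * (x * a) := by ring
        _ = 0 := key _ hxa

end AnnLemmas

section Core

open IsLocalRing

variable [IsLocalRing R]

lemma exists_fg_smul_rep {D : Type u} [AddCommGroup D] [Module R D] (K : Ideal R) (x : D)
    (hx : x ∈ K • (⊤ : Submodule R D)) :
    ∃ I : Ideal R, I.FG ∧ I ≤ K ∧ x ∈ I • (⊤ : Submodule R D) := by
  refine Submodule.smul_induction_on hx ?_ ?_
  · intro r hr n _
    exact ⟨Ideal.span {r}, ⟨{r}, by simp⟩, by rwa [Ideal.span_le, Set.singleton_subset_iff],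
      Submodule.smul_mem_smul (Ideal.subset_span rfl) trivial⟩
  · rintro x y ⟨I₁, hI₁, hle₁, hx₁⟩ ⟨I₂, hI₂, hle₂, hx₂⟩
    exact ⟨I₁ ⊔ I₂, Submodule.FG.sup hI₁ hI₂, sup_le hle₁ hle₂,
      add_mem (Submodule.smul_mono_left le_sup_left hx₁)
        (Submodule.smul_mono_left le_sup_right hx₂)⟩

lemma smul_eq_zero_of_ann {D : Type u} [AddCommGroup D] [Module R D] (I : Ideal R) (t : R)
    (ht : ∀ a ∈ I, t * a = 0) (x : D) (hx : x ∈ I • (⊤ : Submodule R D)) : t • x = 0 := by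
  refine Submodule.smul_induction_on hx ?_ ?_
  · intro r hr n _
    rw [smul_smul, ht r hr, zero_smul]
  · intro a b ha hb
    rw [smul_add, ha, hb, add_zero]

/-- The key lemma: over a local "Gaussian-like" ring whose maximal ideal consists of
zero divisors, an injective map from a flat module is injective modulo the maximal ideal. -/
lemma mem_max_smul_of_apply_mem
    (hG : ∀ a b : R, b ^ 2 ∈ Ideal.span {a} ∨ a ^ 2 ∈ Ideal.span {b})
    (hzd : ∀ x ∈ maximalIdeal R, ∃ s : R, s ≠ 0 ∧ x * s = 0)
    {N D : Type u} [AddCommGroup N] [Module R N] [AddCommGroup D] [Module R D]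
    [Module.Flat R N] (h : N →ₗ[R] D) (hinj : Function.Injective h) (z : N)
    (hz : h z ∈ (maximalIdeal R) • (⊤ : Submodule R D)) :
    z ∈ (maximalIdeal R) • (⊤ : Submodule R N) := by
  obtain ⟨I, hFG, hle, hmem⟩ := exists_fg_smul_rep (maximalIdeal R) (h z) hz
  obtain ⟨t, ht0, htI⟩ := exists_ann_of_fg hG hzd I hFG hle
  have h1 : t • h z = 0 := smul_eq_zero_of_ann I t htI (h z) hmem
  have h2 : t • z = 0 := by
    apply hinj
    rw [map_smul, h1, map_zero]
  have h3 := mem_ann_smul_of_smul_eq_zero t z h2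
  refine Submodule.smul_mono_left ?_ h3
  intro r hr
  rw [LinearMap.mem_ker, LinearMap.toSpanSingleton_apply] at hr
  rw [mem_maximalIdeal, mem_nonunits_iff]
  intro hu
  apply ht0
  calc t = (↑hu.unit⁻¹ : R) * (r • t) := by
        rw [smul_eq_mul, ← mul_assoc, IsUnit.val_inv_mul, one_mul]
    _ = 0 := by rw [hr, mul_zero]

end Core

section MainAlgebra

open IsLocalRing

variable [IsLocalRing R]

theorem main_exact
    (hG : ∀ a b : R, b ^ 2 ∈ Ideal.span {a} ∨ a ^ 2 ∈ Ideal.span {b})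
    (hzd : ∀ x ∈ maximalIdeal R, ∃ s : R, s ≠ 0 ∧ x * s = 0)
    {A B C D : Type u} [AddCommGroup A] [Module R A] [AddCommGroup B] [Module R B]
    [AddCommGroup C] [Module R C] [AddCommGroup D] [Module R D] [Module.Flat R C]
    (e : A →ₗ[R] B) (f : B →ₗ[R] C) (g : C →ₗ[R] D)
    (hef : Function.Exact e f) (hfg : Function.Exact f g)
    (htens : ∀ (W : Type u) [AddCommGroup W] [Module R W],
      Function.Exact (lTensor W e) (lTensor W f)) :
    Function.Exact (lTensor (R ⧸ maximalIdeal R) f) (lTensor (R ⧸ maximalIdeal R) g) := by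
  set k := R ⧸ maximalIdeal R with hk
  set Z : Submodule R C := LinearMap.range f with hZ
  have hker : LinearMap.ker g = Z := (LinearMap.exact_iff.mp hfg)
  -- the induced injection
  set gbar : (C ⧸ Z) →ₗ[R] D := Z.liftQ g hker.ge with hgbar
  have hgbar_inj : Function.Injective gbar := by
    rw [← LinearMap.ker_eq_bot]
    exact Submodule.ker_liftQ_eq_bot' Z g (hZ.trans hker.symm ▸ rfl)
  -- C/Z is flat
  have hflatN : Module.Flat R (C ⧸ Z) :=
    flat_quotient_of_univ_injective Z (lTensor_subtype_injective_of_exact e f hef htens)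
  -- gbar is injective after tensoring with k
  have hgbar_tens_inj : Function.Injective (lTensor k gbar) := by
    have key : ∀ u : k ⊗[R] (C ⧸ Z), lTensor k gbar u = 0 → u = 0 := by
      intro u hu
      obtain ⟨z, rfl⟩ := exists_one_tmul_rep (maximalIdeal R) u
      rw [lTensor_tmul] at hu
      have h1 : gbar z ∈ (maximalIdeal R) • (⊤ : Submodule R D) := by
        rw [← one_tmul_eq_zero_iff (maximalIdeal R)]
        exact hu
      have h2 := mem_max_smul_of_apply_mem hG hzd gbar hgbar_inj z h1
      rw [one_tmul_eq_zero_iff]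
      exact h2
    intro u v huv
    have := key (u - v) (by rw [map_sub, huv, sub_self])
    exact sub_eq_zero.mp this
  -- assemble
  rw [LinearMap.exact_iff]
  have hcomp : gbar ∘ₗ Z.mkQ = g := Z.liftQ_mkQ g hker.ge
  have h1 : LinearMap.ker (lTensor k g) = LinearMap.ker (lTensor k Z.mkQ) := by
    rw [← hcomp, lTensor_comp]
    exact LinearMap.ker_comp_of_ker_eq_bot _ (LinearMap.ker_eq_bot.mpr hgbar_tens_inj)
  rw [h1, lTensor_mkQ]
  -- range (lTensor k Z.subtype) = range (lTensor k f)
  have hcomp2 : Z.subtype ∘ₗ f.rangeRestrict = f := by ext b; rfl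
  rw [← hcomp2, lTensor_comp]
  rw [LinearMap.range_comp_of_range_eq_top]
  rw [LinearMap.range_eq_top]
  exact lTensor_surjective k f.surjective_rangeRestrict

end MainAlgebra


open CategoryTheory Limits MonoidalCategory IsLocalRing

lemma subsingleton_of_isZero {X : ModuleCat.{u} R} (h : IsZero X) : Subsingleton X := by
  refine ⟨fun a b => ?_⟩
  have h1 : (𝟙 X : X ⟶ X) = 0 := h.eq_of_src _ _
  have key : ∀ c : X, c = (0 : X ⟶ X) c := fun c => by rw [← h1]; rfl
  rw [key a, key b]
  rfl

lemma isZero_iff_subsingleton {X : ModuleCat.{u} R} : IsZero X ↔ Subsingleton X :=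
  ⟨subsingleton_of_isZero, fun h => ModuleCat.isZero_of_subsingleton X⟩

/-- Subsingleton-ness of Tor in degree `d+1` is equivalent to exactness of the tensored
projective resolution. -/
lemma tor_subsingleton_iff (M : ModuleCat.{u} R) (P : ProjectiveResolution M)
    (A : ModuleCat.{u} R) (d : ℕ) :
    Subsingleton (TorM R (d + 1) A M) ↔
      Function.Exact
        (LinearMap.lTensor (↥A) (P.complex.d (d + 2) (d + 1)).hom)
        (LinearMap.lTensor (↥A) (P.complex.d (d + 1) d).hom) := by
  letI F := (tensoringLeft (ModuleCat.{u} R)).obj A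
  letI K := (F.mapHomologicalComplex (ComplexShape.down ℕ)).obj P.complex
  have e1 : TorM R (d + 1) A M ≅ K.homology (d + 1) :=
    P.isoLeftDerivedObj F (d + 1)
  have e2 : K.ExactAt (d + 1) ↔ IsZero (K.homology (d + 1)) :=
    K.exactAt_iff_isZero_homology (d + 1)
  have e3 : K.ExactAt (d + 1) ↔ (K.sc' (d + 2) (d + 1) d).Exact :=
    K.exactAt_iff' (d + 2) (d + 1) d (by simp only [ChainComplex.prev]; rfl) (by simp)
  have e4 : (K.sc' (d + 2) (d + 1) d).Exact ↔
      Function.Exact (K.sc' (d + 2) (d + 1) d).f (K.sc' (d + 2) (d + 1) d).g :=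
    ShortComplex.ShortExact.moduleCat_exact_iff_function_exact _
  have e5 : Function.Exact (K.sc' (d + 2) (d + 1) d).f (K.sc' (d + 2) (d + 1) d).g ↔
      Function.Exact
        (LinearMap.lTensor (↥A) (P.complex.d (d + 2) (d + 1)).hom)
        (LinearMap.lTensor (↥A) (P.complex.d (d + 1) d).hom) := Iff.rfl
  rw [← e5, ← e4, ← e3]
  constructor
  · intro hsub
    exact e2.mpr ((isZero_iff_subsingleton.mpr hsub).of_iso e1.symm)
  · intro hex
    exact isZero_iff_subsingleton.mp ((e2.mp hex).of_iso e1)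


end Aux

/-- If `M` is a module over a local Gaussian ring all of whose maximal-ideal elements
are zero divisors, and `wgd_R(M) = n ≥ 1`, then `Tor_n(R/m, M) = 0`. -/
theorem tor_residue_field_eq_zero (R : Type u) [CommRing R] [IsLocalRing R] (hR : IsGaussian R)
    (hzd : ∀ x ∈ IsLocalRing.maximalIdeal R, ∃ s : R, s ≠ 0 ∧ x * s = 0)
    (M : ModuleCat.{u} R) (n : ℕ) (hn : 1 ≤ n) (hM : wgdModule R M = (n : ℕ∞)) :
    Subsingleton (TorM R n (ModuleCat.of R (R ⧸ IsLocalRing.maximalIdeal R)) M) := by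
  classical
  obtain ⟨m', rfl⟩ : ∃ m', n = m' + 1 := ⟨n - 1, by omega⟩
  have hG := sq_mem_or_sq_mem hR
  -- all Tor in degree m'+2 vanish
  have hvanish : ∀ B : ModuleCat.{u} R, Subsingleton (TorM R (m' + 1 + 1) B M) := by
    intro B
    by_contra hB
    have hnt : Nontrivial (TorM R (m' + 1 + 1) B M) := not_subsingleton_iff_nontrivial.mp hB
    have hmem : ((m' + 1 + 1 : ℕ) : ℕ∞) ∈
        (↑) '' {d : ℕ | ∃ A : ModuleCat.{u} R, Nontrivial (TorM R d A M)} :=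
      ⟨m' + 1 + 1, ⟨B, hnt⟩, rfl⟩
    have hle := le_sSup hmem
    rw [show sSup ((↑) '' {d : ℕ | ∃ A : ModuleCat.{u} R, Nontrivial (TorM R d A M)}) =
      wgdModule R M from rfl, hM] at hle
    have := Nat.cast_le.mp hle
    omega
  obtain ⟨P⟩ := (inferInstance : HasProjectiveResolution M).out
  rw [tor_subsingleton_iff M P _ m']
  -- flatness of the relevant term of the resolution
  have hproj : Module.Projective R ↥(P.complex.X (m' + 1)) := by
    rw [IsProjective.iff_projective]
    have : ModuleCat.of R ↥(P.complex.X (m' + 1)) = P.complex.X (m' + 1) := rfl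
    rw [this]
    infer_instance
  have hflat : Module.Flat R ↥(P.complex.X (m' + 1)) := Module.Flat.of_projective
  -- exactness of the resolution
  have hef : Function.Exact
      (P.complex.d (m' + 3) (m' + 2)).hom
      (P.complex.d (m' + 2) (m' + 1)).hom :=
    (ShortComplex.ShortExact.moduleCat_exact_iff_function_exact
      (ShortComplex.mk _ _ (P.complex.d_comp_d (m' + 3) (m' + 2) (m' + 1)))).mp
      (P.exact_succ (m' + 1))
  have hfg : Function.Exact
      (P.complex.d (m' + 2) (m' + 1)).hom
      (P.complex.d (m' + 1) m').hom :=
    (ShortComplex.ShortExact.moduleCat_exact_iff_function_exact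
      (ShortComplex.mk _ _ (P.complex.d_comp_d (m' + 2) (m' + 1) m'))).mp (P.exact_succ m')
  -- the universal tensor-exactness hypothesis
  have htens : ∀ (W : Type u) [AddCommGroup W] [Module R W],
      Function.Exact
        (LinearMap.lTensor W (P.complex.d (m' + 3) (m' + 2)).hom)
        (LinearMap.lTensor W (P.complex.d (m' + 2) (m' + 1)).hom) := by
    intro W _ _
    have := (tor_subsingleton_iff M P (ModuleCat.of R W) (m' + 1)).mp
      (hvanish (ModuleCat.of R W))
    exact this
  exact main_exact hG hzd
    (P.complex.d (m' + 3) (m' + 2)).hom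
    (P.complex.d (m' + 2) (m' + 1)).hom
    (P.complex.d (m' + 1) m').hom
    hef hfg htens
end
end

section
/- Let (R, m) be a local arithmetical ring whose maximal ideal m coincides with the nilradical of R. For any nonzero x ∈ m, if I = (0 : x) is the annihilator of x, then (0 : I) = xR. -/
open CategoryTheory Polynomial

universe u

noncomputable section

/-- A commutative ring is arithmetical if its lattice of ideals is distributive. -/
def IsArithmetical (R : Type u) [CommRing R] : Prop :=
  ∀ I J K : Ideal R, I ⊓ (J ⊔ K) = (I ⊓ J) ⊔ (I ⊓ K)

lemma mem_of_unit_mul {R : Type u} [CommRing R] {I : Ideal R} {s b : R}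
    (hs : IsUnit s) (h : s * b ∈ I) : b ∈ I := by
  obtain ⟨u, rfl⟩ := hs
  have := I.mul_mem_left (↑u⁻¹) h
  rwa [← mul_assoc, ← Units.val_mul, inv_mul_cancel, Units.val_one, one_mul] at this

lemma span_le_or_le (R : Type u) [CommRing R] [IsLocalRing R]
    (hR : IsArithmetical R) (a b : R) :
    a ∈ Ideal.span {b} ∨ b ∈ Ideal.span {a} := by
  have hmem : a ∈ Ideal.span ({a} : Set R) ⊓ (Ideal.span {b} ⊔ Ideal.span {a - b}) := by
    refine ⟨Ideal.mem_span_singleton_self a, ?_⟩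
    have h2 := Submodule.add_mem_sup (Ideal.mem_span_singleton_self b)
      (Ideal.mem_span_singleton_self (a - b))
    rwa [show b + (a - b) = a by ring] at h2
  rw [hR] at hmem
  obtain ⟨u, hu, v, hv, huv⟩ := Submodule.mem_sup.1 hmem
  obtain ⟨hva, hvab⟩ := hv
  obtain ⟨hua, hub⟩ := hu
  obtain ⟨s, hs⟩ := Ideal.mem_span_singleton'.1 hvab
  have hsb : s * b ∈ Ideal.span ({a} : Set R) := by
    have h : s * b = s * a - v := by linear_combination -hs
    rw [h]
    exact Submodule.sub_mem _ (Ideal.mul_mem_left _ _ (Ideal.mem_span_singleton_self a)) hva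
  have h1sa : (1 - s) * a ∈ Ideal.span ({b} : Set R) := by
    have h : (1 - s) * a = u - s * b := by linear_combination -huv - hs
    rw [h]
    exact Submodule.sub_mem _ hub (Ideal.mul_mem_left _ _ (Ideal.mem_span_singleton_self b))
  rcases IsLocalRing.isUnit_or_isUnit_one_sub_self s with h | h
  · exact Or.inr (mem_of_unit_mul h hsb)
  · exact Or.inl (mem_of_unit_mul h h1sa)

/-- In a local arithmetical ring whose maximal ideal is the nilradical, for any nonzero
`x` in the maximal ideal, the annihilator of the annihilator of `x` is `xR`. -/
theorem annihilator_annihilator_eq_span (R : Type u) [CommRing R] [IsLocalRing R]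
    (hR : IsArithmetical R)
    (hm : IsLocalRing.maximalIdeal R = nilradical R)
    (x : R) (hx : x ∈ IsLocalRing.maximalIdeal R) (hx0 : x ≠ 0) :
    ((Ideal.span {x} : Ideal R).annihilator : Submodule R R).annihilator = Ideal.span {x} := by
  classical
  apply le_antisymm
  · intro z hz
    by_contra hznx
    rcases span_le_or_le R hR z x with h | h
    · exact hznx h
    · obtain ⟨a, ha⟩ := Ideal.mem_span_singleton'.1 h
      have haunit : ¬ IsUnit a := fun hu =>
        hznx (mem_of_unit_mul hu (by rw [ha]; exact Ideal.mem_span_singleton_self x))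
      have ham : a ∈ IsLocalRing.maximalIdeal R := haunit
      have hnil : IsNilpotent a := by rw [hm] at ham; exact ham
      obtain ⟨n, hn⟩ := hnil
      have hz0 : z ≠ 0 := fun h0 => hznx (h0 ▸ Ideal.zero_mem _)
      have hex : ∃ k, a ^ k * z = 0 := ⟨n, by rw [hn, zero_mul]⟩
      have hk : a ^ Nat.find hex * z = 0 := Nat.find_spec hex
      have hkpos : Nat.find hex ≠ 0 := by
        intro h0
        rw [h0, pow_zero, one_mul] at hk
        exact hz0 hk
      have hprev : a ^ (Nat.find hex - 1) * z ≠ 0 :=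
        Nat.find_min hex (Nat.pred_lt hkpos)
      have hxz : a ^ (Nat.find hex - 1) * x = 0 := by
        rw [← ha, ← mul_assoc, ← pow_succ, Nat.sub_add_cancel (Nat.one_le_iff_ne_zero.2 hkpos)]
        exact hk
      have ht : a ^ (Nat.find hex - 1) ∈ (Ideal.span {x} : Ideal R).annihilator := by
        rw [Submodule.mem_annihilator]
        intro m hm'
        obtain ⟨r, hr⟩ := Ideal.mem_span_singleton'.1 hm'
        rw [smul_eq_mul, ← hr, show a ^ (Nat.find hex - 1) * (r * x)
          = r * (a ^ (Nat.find hex - 1) * x) by ring, hxz, mul_zero]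
      have hcon := Submodule.mem_annihilator.1 hz _ ht
      rw [smul_eq_mul, mul_comm] at hcon
      exact hprev hcon
  · rw [Ideal.span_le]
    rintro y hy
    rw [Set.mem_singleton_iff] at hy
    rw [hy]
    rw [SetLike.mem_coe, Submodule.mem_annihilator]
    intro n hn
    have := Submodule.mem_annihilator.1 hn x (Ideal.mem_span_singleton_self x)
    rw [smul_eq_mul] at this ⊢
    rw [mul_comm]
    exact this
end
end

section
/- Let (R, m) be a local Gaussian ring whose maximal ideal m coincides with the nilradical of R, and let λ ∈ m. If m is not nilpotent, then there exists z ∈ m such that deg(z) > deg(λ), where deg(r) denotes the nilpotency degree of r, i.e. the smallest k ∈ ℕ with r^k = 0. -/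
open CategoryTheory Polynomial

universe u

noncomputable section

/-- The nilpotency degree of an element: the smallest `k` with `r ^ k = 0`. -/
def nilDeg {R : Type u} [CommRing R] (r : R) : ℕ :=
  sInf {k : ℕ | r ^ k = 0}

lemma key_gaussian {R : Type u} [CommRing R] (hR : IsGaussian R) (a b : R) :
    a * b ∈ Ideal.span {a ^ 2, b ^ 2} := by
  have hf : a ∈ _root_.contentIdeal (C a * X + C b) :=
    Ideal.subset_span ⟨1, by simp⟩
  have hg : -b ∈ _root_.contentIdeal (C a * X - C b) :=
    Ideal.subset_span ⟨0, by simp⟩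
  have hmul := Ideal.mul_mem_mul hf hg
  rw [← hR] at hmul
  have hle : _root_.contentIdeal ((C a * X + C b) * (C a * X - C b)) ≤ Ideal.span {a ^ 2, b ^ 2} := by
    rw [_root_.contentIdeal]
    apply Ideal.span_le.2
    rintro y ⟨k, rfl⟩
    have h2 : (C a * X + C b) * (C a * X - C b) = C (a ^ 2) * X ^ 2 - C (b ^ 2) := by
      rw [C_pow, C_pow]; ring
    rw [h2]
    simp only [coeff_sub, coeff_C_mul, coeff_X_pow, coeff_C, mul_ite, mul_one, mul_zero]
    split_ifs with h1 h2
    · omega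
    · simpa using Ideal.subset_span (by simp : a ^ 2 ∈ ({a ^ 2, b ^ 2} : Set R))
    · simpa using neg_mem (Ideal.subset_span (by simp : b ^ 2 ∈ ({a ^ 2, b ^ 2} : Set R)))
    · simp
  have h4 := hle hmul
  have h3 : a * b = -(a * -b) := by ring
  rw [h3]
  exact neg_mem h4

lemma pow_le_span_pows {R : Type u} [CommRing R] (hR : IsGaussian R) (I : Ideal R) (j : ℕ) :
    I ^ (2 ^ j) ≤ Ideal.span ((fun x => x ^ (2 ^ j)) '' (I : Set R)) := by
  induction j with
  | zero =>
    simp only [pow_zero, pow_one]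
    intro x hx
    exact Ideal.subset_span ⟨x, hx, by simp⟩
  | succ j ih =>
    have h1 : I ^ (2 ^ (j + 1)) = I ^ (2 ^ j) * I ^ (2 ^ j) := by
      rw [← pow_add]; ring_nf
    rw [h1]
    calc I ^ (2 ^ j) * I ^ (2 ^ j)
        ≤ Ideal.span ((fun x => x ^ (2 ^ j)) '' (I : Set R)) *
          Ideal.span ((fun x => x ^ (2 ^ j)) '' (I : Set R)) := Ideal.mul_mono ih ih
      _ ≤ Ideal.span ((fun x => x ^ (2 ^ (j + 1))) '' (I : Set R)) := by
          rw [Ideal.span_mul_span]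
          apply Ideal.span_le.2
          rw [Set.mul_subset_iff]
          rintro s ⟨x, hx, rfl⟩ t ⟨y, hy, rfl⟩
          have hk := key_gaussian hR (x ^ (2 ^ j)) (y ^ (2 ^ j))
          have e1 : (x ^ (2 ^ j)) ^ 2 = x ^ (2 ^ (j + 1)) := by
            rw [← pow_mul]; ring_nf
          have e2 : (y ^ (2 ^ j)) ^ 2 = y ^ (2 ^ (j + 1)) := by
            rw [← pow_mul]; ring_nf
          rw [e1, e2] at hk
          refine Ideal.span_mono ?_ hk
          rintro z (rfl | rfl)
          · exact ⟨x, hx, rfl⟩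
          · exact ⟨y, hy, rfl⟩

/-- In a local Gaussian ring whose maximal ideal is the nilradical and is not nilpotent,
for every `λ` in the maximal ideal there is an element of strictly larger nilpotency
degree. -/
theorem exists_nilDeg_gt (R : Type u) [CommRing R] [IsLocalRing R] (hR : IsGaussian R)
    (hm : IsLocalRing.maximalIdeal R = nilradical R)
    (hnil : ¬ IsNilpotent (IsLocalRing.maximalIdeal R))
    (lam : R) (hlam : lam ∈ IsLocalRing.maximalIdeal R) :
    ∃ z ∈ IsLocalRing.maximalIdeal R, nilDeg lam < nilDeg z := by
  by_contra h
  push_neg at h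
  set m := IsLocalRing.maximalIdeal R
  set n := nilDeg lam
  obtain ⟨j, hj⟩ : ∃ j : ℕ, n < 2 ^ j := ⟨n, Nat.lt_two_pow_self⟩
  have hz : ∀ x ∈ m, x ^ (2 ^ j) = 0 := by
    intro x hx
    have hnilx : IsNilpotent x := by rwa [hm] at hx
    have hne : {k : ℕ | x ^ k = 0}.Nonempty := hnilx
    have hxd : x ^ nilDeg x = 0 := Nat.sInf_mem hne
    exact pow_eq_zero_of_le (le_trans (h x hx) hj.le) hxd
  apply hnil
  refine ⟨2 ^ j, ?_⟩
  have hle := pow_le_span_pows hR m j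
  have htriv : Ideal.span ((fun x => x ^ (2 ^ j)) '' (m : Set R)) ≤ ⊥ := by
    apply Ideal.span_le.2
    rintro y ⟨x, hx, rfl⟩
    simp [hz x hx]
  exact le_bot_iff.mp (hle.trans htriv)
end
end
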